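/- arXiv:2306.04483 — 7 statements merged into one kernel-verified Lean document; each statement's English description precedes it below -/
import Mathlib

section
/- Let d ≥ 1 and let φ ∈ Φ_d have a nonincreasing d-radial spectral density f_d. Let a₁ ≥ a₂ > 0 and b₁, b₂ ≥ 0 be constants satisfying b₁ ≥ b₂ (a₁/a₂)^{d/2}. Then for every vector η ∈ ℝ^d, the function h ↦ b₁ φ(√a₁ ‖h‖) − (b₂/2) [ φ(√a₂ ‖h − η‖) + φ(√a₂ ‖h + η‖) ] is a stationary covariance function on ℝ^d. -/
open MeasureTheory
open scoped BigOperators RealInnerProductSpace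

noncomputable section

/-- A function `C : ℝ^d → ℝ` is a stationary covariance function if it is
positive semidefinite. -/
def IsStationaryCovariance (d : ℕ) (C : EuclideanSpace ℝ (Fin d) → ℝ) : Prop :=
  ∀ (n : ℕ) (x : Fin n → EuclideanSpace ℝ (Fin d)) (v : Fin n → ℝ),
    0 ≤ ∑ i, ∑ j, v i * v j * C (x i - x j)

/-- `φ : [0,∞) → ℝ` belongs to the class `Φ_d`. -/
def MemPhi (d : ℕ) (φ : ℝ → ℝ) : Prop :=
  ContinuousOn φ (Set.Ici 0) ∧ IsStationaryCovariance d (fun h => φ ‖h‖)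

/-- `f` is a `d`-radial spectral density of `φ`. -/
def IsRadialSpectralDensity (d : ℕ) (φ f : ℝ → ℝ) : Prop :=
  (∀ u : ℝ, 0 ≤ u → 0 ≤ f u) ∧
  MeasureTheory.Integrable (fun ω : EuclideanSpace ℝ (Fin d) => f ‖ω‖) ∧
  ∀ h : EuclideanSpace ℝ (Fin d),
    (φ ‖h‖ : ℂ) = ∫ ω : EuclideanSpace ℝ (Fin d),
      Complex.exp (Complex.I * ((⟪h, ω⟫ : ℝ) : ℂ)) * ((f ‖ω‖ : ℝ) : ℂ)

/-- The quadratic form `hᵀ A h`. -/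
def quadForm {d : ℕ} (A : Matrix (Fin d) (Fin d) ℝ) (h : EuclideanSpace ℝ (Fin d)) : ℝ :=
  ∑ i, ∑ j, h i * A i j * h j

/-! ### Auxiliary material -/

/-- The squared modulus of the "empirical characteristic function". -/
def Wfun {d n : ℕ} (x : Fin n → EuclideanSpace ℝ (Fin d)) (v : Fin n → ℝ)
    (ξ : EuclideanSpace ℝ (Fin d)) : ℝ :=
  (∑ i, v i * Real.cos ⟪x i, ξ⟫) ^ 2 + (∑ i, v i * Real.sin ⟪x i, ξ⟫) ^ 2

lemma Wfun_nonneg {d n : ℕ} (x : Fin n → EuclideanSpace ℝ (Fin d)) (v : Fin n → ℝ)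
    (ξ : EuclideanSpace ℝ (Fin d)) : 0 ≤ Wfun x v ξ := by
  unfold Wfun; positivity

lemma Wfun_cont {d n : ℕ} (x : Fin n → EuclideanSpace ℝ (Fin d)) (v : Fin n → ℝ) :
    Continuous (Wfun x v) := by
  unfold Wfun
  apply Continuous.add
  · exact (continuous_finset_sum _ fun i _ => continuous_const.mul
      (Real.continuous_cos.comp (continuous_const.inner continuous_id))).pow 2
  · exact (continuous_finset_sum _ fun i _ => continuous_const.mul
      (Real.continuous_sin.comp (continuous_const.inner continuous_id))).pow 2

lemma Wfun_le {d n : ℕ} (x : Fin n → EuclideanSpace ℝ (Fin d)) (v : Fin n → ℝ)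
    (ξ : EuclideanSpace ℝ (Fin d)) : Wfun x v ξ ≤ 2 * (∑ i, |v i|) ^ 2 := by
  have hb : ∀ g : Fin n → ℝ, (∀ i, |g i| ≤ 1) →
      (∑ i, v i * g i) ^ 2 ≤ (∑ i, |v i|) ^ 2 := by
    intro g hg
    have h1 : |∑ i, v i * g i| ≤ ∑ i, |v i| := by
      refine (Finset.abs_sum_le_sum_abs _ _).trans (Finset.sum_le_sum fun i _ => ?_)
      rw [abs_mul]
      exact mul_le_of_le_one_right (abs_nonneg _) (hg i)
    calc (∑ i, v i * g i) ^ 2 = |∑ i, v i * g i| ^ 2 := (sq_abs _).symm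
      _ ≤ (∑ i, |v i|) ^ 2 := by
          exact pow_le_pow_left₀ (abs_nonneg _) h1 2
  have h1 := hb (fun i => Real.cos ⟪x i, ξ⟫) fun i => Real.abs_cos_le_one _
  have h2 := hb (fun i => Real.sin ⟪x i, ξ⟫) fun i => Real.abs_sin_le_one _
  unfold Wfun; linarith

lemma aux_sum_cos {d n : ℕ} (x : Fin n → EuclideanSpace ℝ (Fin d)) (v : Fin n → ℝ)
    (ξ : EuclideanSpace ℝ (Fin d)) :
    ∑ i, ∑ j, v i * v j * Real.cos ⟪x i - x j, ξ⟫ = Wfun x v ξ := by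
  unfold Wfun
  simp_rw [inner_sub_left, Real.cos_sub, sq, Finset.sum_mul_sum, ← Finset.sum_add_distrib]
  exact Finset.sum_congr rfl fun i _ => Finset.sum_congr rfl fun j _ => by ring

lemma aux_shift {d : ℕ} (y η ξ : EuclideanSpace ℝ (Fin d)) :
    Real.cos ⟪y - η, ξ⟫ + Real.cos ⟪y + η, ξ⟫
      = 2 * Real.cos ⟪η, ξ⟫ * Real.cos ⟪y, ξ⟫ := by
  simp only [inner_sub_left, inner_add_left, Real.cos_sub, Real.cos_add]
  ring

lemma aux_sum_shift {d n : ℕ} (x : Fin n → EuclideanSpace ℝ (Fin d)) (v : Fin n → ℝ)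
    (η ξ : EuclideanSpace ℝ (Fin d)) :
    ∑ i, ∑ j, v i * v j * (Real.cos ⟪x i - x j - η, ξ⟫ + Real.cos ⟪x i - x j + η, ξ⟫)
      = 2 * Real.cos ⟪η, ξ⟫ * Wfun x v ξ := by
  calc ∑ i, ∑ j, v i * v j * (Real.cos ⟪x i - x j - η, ξ⟫ + Real.cos ⟪x i - x j + η, ξ⟫)
      = ∑ i, ∑ j, 2 * Real.cos ⟪η, ξ⟫ * (v i * v j * Real.cos ⟪x i - x j, ξ⟫) := by
        refine Finset.sum_congr rfl fun i _ => Finset.sum_congr rfl fun j _ => ?_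
        rw [aux_shift]; ring
    _ = 2 * Real.cos ⟪η, ξ⟫ * ∑ i, ∑ j, v i * v j * Real.cos ⟪x i - x j, ξ⟫ := by
        simp_rw [← Finset.mul_sum]
    _ = _ := by rw [aux_sum_cos]

lemma repA {d : ℕ} {φ f : ℝ → ℝ} (hf : IsRadialSpectralDensity d φ f)
    {a : ℝ} (y : EuclideanSpace ℝ (Fin d)) :
    φ (Real.sqrt a * ‖y‖) =
      ∫ ω : EuclideanSpace ℝ (Fin d), Real.cos ⟪y, Real.sqrt a • ω⟫ * f ‖ω‖ := by
  have h0 := hf.2.2 (Real.sqrt a • y)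
  have hns : ‖Real.sqrt a • y‖ = Real.sqrt a * ‖y‖ := by
    rw [norm_smul, Real.norm_eq_abs, abs_of_nonneg (Real.sqrt_nonneg a)]
  have hin : ∀ ω : EuclideanSpace ℝ (Fin d),
      ⟪Real.sqrt a • y, ω⟫ = ⟪y, Real.sqrt a • ω⟫ := fun ω => by
    rw [real_inner_smul_left, real_inner_smul_right]
  rw [hns] at h0
  have hint : Integrable (fun ω : EuclideanSpace ℝ (Fin d) =>
      Complex.exp (Complex.I * ((⟪Real.sqrt a • y, ω⟫ : ℝ) : ℂ)) * ((f ‖ω‖ : ℝ) : ℂ)) := by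
    refine Integrable.bdd_mul (c := 1) hf.2.1.ofReal ?_ (Filter.Eventually.of_forall fun ω => ?_)
    · exact (Complex.continuous_exp.comp (continuous_const.mul
        (Complex.continuous_ofReal.comp
          (continuous_const.inner continuous_id)))).aestronglyMeasurable
    · simp [Complex.norm_exp, Complex.mul_re]
  have h2 : ∀ ω : EuclideanSpace ℝ (Fin d),
      (Complex.exp (Complex.I * ((⟪Real.sqrt a • y, ω⟫ : ℝ) : ℂ)) * ((f ‖ω‖ : ℝ) : ℂ)).re
        = Real.cos ⟪y, Real.sqrt a • ω⟫ * f ‖ω‖ := by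
    intro ω
    rw [mul_comm Complex.I, Complex.mul_re, Complex.exp_ofReal_mul_I_re, hin]
    simp
  calc φ (Real.sqrt a * ‖y‖) = ((φ (Real.sqrt a * ‖y‖) : ℝ) : ℂ).re := (Complex.ofReal_re _).symm
    _ = (∫ ω : EuclideanSpace ℝ (Fin d),
          Complex.exp (Complex.I * ((⟪Real.sqrt a • y, ω⟫ : ℝ) : ℂ)) * ((f ‖ω‖ : ℝ) : ℂ)).re := by
        rw [h0]
    _ = ∫ ω : EuclideanSpace ℝ (Fin d),
          (Complex.exp (Complex.I * ((⟪Real.sqrt a • y, ω⟫ : ℝ) : ℂ)) * ((f ‖ω‖ : ℝ) : ℂ)).re := by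
        have h3 := integral_re hint
        simp only [RCLike.re_to_complex] at h3
        exact h3.symm
    _ = _ := by simp_rw [h2]

lemma aux_integrable {d : ℕ} {f : ℝ → ℝ}
    (hfInt : Integrable fun ω : EuclideanSpace ℝ (Fin d) => f ‖ω‖)
    {g : EuclideanSpace ℝ (Fin d) → ℝ} (hg : Continuous g) (C : ℝ)
    (hC : ∀ ξ, |g ξ| ≤ C) {c : ℝ} (hc : c ≠ 0) :
    Integrable (fun ω : EuclideanSpace ℝ (Fin d) => g ω * f ‖c • ω‖) := by
  have h1 : Integrable (fun ω : EuclideanSpace ℝ (Fin d) => f ‖c • ω‖) := hfInt.comp_smul hc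
  exact h1.bdd_mul (c := C) hg.aestronglyMeasurable (Filter.Eventually.of_forall fun ξ => by simpa using hC ξ)

theorem statement_3 (d : ℕ) (hd : 1 ≤ d) (φ f : ℝ → ℝ)
    (hφ : MemPhi d φ) (hf : IsRadialSpectralDensity d φ f)
    (hfmono : AntitoneOn f (Set.Ici 0))
    (a₁ a₂ b₁ b₂ : ℝ) (ha₂ : 0 < a₂) (ha : a₂ ≤ a₁) (hb₁ : 0 ≤ b₁) (hb₂ : 0 ≤ b₂)
    (hcond : b₂ * (a₁ / a₂) ^ ((d : ℝ) / 2) ≤ b₁)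
    (η : EuclideanSpace ℝ (Fin d)) :
    IsStationaryCovariance d
      (fun h => b₁ * φ (Real.sqrt a₁ * ‖h‖) -
        b₂ / 2 * (φ (Real.sqrt a₂ * ‖h - η‖) + φ (Real.sqrt a₂ * ‖h + η‖))) := by
  intro n x v
  have ha₁ : 0 < a₁ := lt_of_lt_of_le ha₂ ha
  set c₁ := Real.sqrt a₁ with hc₁def
  set c₂ := Real.sqrt a₂ with hc₂def
  have hc₁ : (0:ℝ) < c₁ := Real.sqrt_pos.2 ha₁
  have hc₂ : (0:ℝ) < c₂ := Real.sqrt_pos.2 ha₂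
  have hc₂₁ : c₂ ≤ c₁ := Real.sqrt_le_sqrt ha
  have hfInt := hf.2.1
  have hf0 : ∀ u : ℝ, 0 ≤ u → 0 ≤ f u := hf.1
  set B := 2 * (∑ i, |v i|) ^ 2 with hBdef
  -- elementary integrability
  have hcos : ∀ (y : EuclideanSpace ℝ (Fin d)) (c : ℝ),
      Integrable (fun ω : EuclideanSpace ℝ (Fin d) => Real.cos ⟪y, c • ω⟫ * f ‖ω‖) := by
    intro y c
    refine hfInt.bdd_mul (c := 1) ?_ (Filter.Eventually.of_forall fun ω => by simpa using Real.abs_cos_le_one _)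
    exact (Real.continuous_cos.comp
      (continuous_const.inner (continuous_const_smul c))).aestronglyMeasurable
  -- the per-term integrand
  set T : Fin n → Fin n → EuclideanSpace ℝ (Fin d) → ℝ := fun i j ω =>
    (v i * v j * b₁) * (Real.cos ⟪x i - x j, c₁ • ω⟫ * f ‖ω‖)
      - (v i * v j * (b₂ / 2)) * (Real.cos ⟪x i - x j - η, c₂ • ω⟫ * f ‖ω‖
          + Real.cos ⟪x i - x j + η, c₂ • ω⟫ * f ‖ω‖) with hTdef
  have hTint : ∀ i j, Integrable (T i j) := fun i j =>
    (((hcos _ _).const_mul _)).sub ((((hcos _ _).add (hcos _ _)).const_mul _))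
  have hTval : ∀ i j, v i * v j *
      (b₁ * φ (c₁ * ‖x i - x j‖) -
        b₂ / 2 * (φ (c₂ * ‖x i - x j - η‖) + φ (c₂ * ‖x i - x j + η‖)))
      = ∫ ω, T i j ω := by
    intro i j
    have hB0 : Integrable (fun ω : EuclideanSpace ℝ (Fin d) =>
        Real.cos ⟪x i - x j - η, c₂ • ω⟫ * f ‖ω‖
          + Real.cos ⟪x i - x j + η, c₂ • ω⟫ * f ‖ω‖) := (hcos _ _).add (hcos _ _)
    have hA : Integrable (fun ω : EuclideanSpace ℝ (Fin d) =>
        (v i * v j * b₁) * (Real.cos ⟪x i - x j, c₁ • ω⟫ * f ‖ω‖)) :=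
      (hcos _ _).const_mul _
    have hB : Integrable (fun ω : EuclideanSpace ℝ (Fin d) =>
        (v i * v j * (b₂ / 2)) * (Real.cos ⟪x i - x j - η, c₂ • ω⟫ * f ‖ω‖
          + Real.cos ⟪x i - x j + η, c₂ • ω⟫ * f ‖ω‖)) := hB0.const_mul _
    simp only [hTdef]
    rw [integral_sub hA hB, integral_const_mul, integral_const_mul,
      integral_add (hcos _ _) (hcos _ _), ← repA hf, ← repA hf, ← repA hf]
    ring
  -- main pointwise identity
  have hptw : ∀ ω : EuclideanSpace ℝ (Fin d), ∑ i, ∑ j, T i j ω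
      = b₁ * (Wfun x v (c₁ • ω) * f ‖ω‖)
        - b₂ * (Real.cos ⟪η, c₂ • ω⟫ * Wfun x v (c₂ • ω) * f ‖ω‖) := by
    intro ω
    have e1 : ∑ i, ∑ j, T i j ω
        = (∑ i, ∑ j, v i * v j * Real.cos ⟪x i - x j, c₁ • ω⟫) * (b₁ * f ‖ω‖)
          - (∑ i, ∑ j, v i * v j * (Real.cos ⟪x i - x j - η, c₂ • ω⟫
              + Real.cos ⟪x i - x j + η, c₂ • ω⟫)) * (b₂ / 2 * f ‖ω‖) := by
      simp_rw [Finset.sum_mul, ← Finset.sum_sub_distrib]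
      exact Finset.sum_congr rfl fun i _ => Finset.sum_congr rfl fun j _ => by
        rw [hTdef]; ring
    rw [e1, aux_sum_cos, aux_sum_shift]
    ring
  -- the quadratic form as a single integral
  have hS : ∑ i, ∑ j, v i * v j *
      (b₁ * φ (c₁ * ‖x i - x j‖) -
        b₂ / 2 * (φ (c₂ * ‖x i - x j - η‖) + φ (c₂ * ‖x i - x j + η‖)))
      = ∫ ω, (b₁ * (Wfun x v (c₁ • ω) * f ‖ω‖)
          - b₂ * (Real.cos ⟪η, c₂ • ω⟫ * Wfun x v (c₂ • ω) * f ‖ω‖)) := by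
    calc ∑ i, ∑ j, v i * v j *
        (b₁ * φ (c₁ * ‖x i - x j‖) -
          b₂ / 2 * (φ (c₂ * ‖x i - x j - η‖) + φ (c₂ * ‖x i - x j + η‖)))
        = ∑ i, ∑ j, ∫ ω, T i j ω :=
          Finset.sum_congr rfl fun i _ => Finset.sum_congr rfl fun j _ => hTval i j
      _ = ∑ i, ∫ ω, ∑ j, T i j ω :=
          Finset.sum_congr rfl fun i _ =>
            (integral_finset_sum _ fun j _ => hTint i j).symm
      _ = ∫ ω, ∑ i, ∑ j, T i j ω :=
          (integral_finset_sum _ fun i _ =>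
            integrable_finset_sum _ fun j _ => hTint i j).symm
      _ = _ := by simp_rw [hptw]
  -- integrability of the two main pieces
  have hWbd : ∀ (c : ℝ) (ξ : EuclideanSpace ℝ (Fin d)), |Wfun x v (c • ξ)| ≤ B := fun c ξ => by
    rw [abs_of_nonneg (Wfun_nonneg _ _ _)]; exact Wfun_le _ _ _
  have hI1 : Integrable (fun ω : EuclideanSpace ℝ (Fin d) => Wfun x v (c₁ • ω) * f ‖ω‖) :=
    hfInt.bdd_mul (c := B) ((Wfun_cont x v).comp (continuous_const_smul c₁)).aestronglyMeasurable
      (Filter.Eventually.of_forall fun ω => by simpa using hWbd c₁ ω)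
  have hI2 : Integrable (fun ω : EuclideanSpace ℝ (Fin d) =>
      Real.cos ⟪η, c₂ • ω⟫ * Wfun x v (c₂ • ω) * f ‖ω‖) := by
    refine hfInt.bdd_mul (c := B) ?_ (Filter.Eventually.of_forall fun ω => ?_)
    · exact ((Real.continuous_cos.comp (continuous_const.inner (continuous_const_smul c₂))).mul
        ((Wfun_cont x v).comp (continuous_const_smul c₂))).aestronglyMeasurable
    · have := hWbd c₂ ω
      have h1 : |Real.cos ⟪η, c₂ • ω⟫| ≤ 1 := Real.abs_cos_le_one _
      have hBnn : (0:ℝ) ≤ B := by positivity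
      calc ‖Real.cos ⟪η, c₂ • ω⟫ * Wfun x v (c₂ • ω)‖
          = |Real.cos ⟪η, c₂ • ω⟫| * |Wfun x v (c₂ • ω)| := by rw [Real.norm_eq_abs, abs_mul]
        _ ≤ 1 * B := mul_le_mul h1 this (abs_nonneg _) zero_le_one
        _ = B := one_mul B
  -- change of variables
  have hfrk : Module.finrank ℝ (EuclideanSpace ℝ (Fin d)) = d := finrank_euclideanSpace_fin
  have hcov : ∀ (c : ℝ), 0 < c → ∀ G : EuclideanSpace ℝ (Fin d) → ℝ,
      ∫ ω, G (c • ω) = (c ^ d)⁻¹ * ∫ ξ, G ξ := by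
    intro c hc G
    rw [MeasureTheory.Measure.integral_comp_smul_of_nonneg volume G c (hR := hc.le),
      hfrk, smul_eq_mul]
  have hsm : ∀ (c : ℝ), c ≠ 0 → ∀ ω : EuclideanSpace ℝ (Fin d), c⁻¹ • c • ω = ω := by
    intro c hc ω
    rw [smul_smul, inv_mul_cancel₀ hc, one_smul]
  have hcov1 : ∫ ω, Wfun x v (c₁ • ω) * f ‖ω‖
      = (c₁ ^ d)⁻¹ * ∫ ξ, Wfun x v ξ * f ‖c₁⁻¹ • ξ‖ := by
    rw [← hcov c₁ hc₁ (fun ξ => Wfun x v ξ * f ‖c₁⁻¹ • ξ‖)]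
    refine integral_congr_ae (Filter.Eventually.of_forall fun ω => ?_)
    simp only [hsm c₁ hc₁.ne' ω]
  have hcov2 : ∫ ω, Real.cos ⟪η, c₂ • ω⟫ * Wfun x v (c₂ • ω) * f ‖ω‖
      = (c₂ ^ d)⁻¹ * ∫ ξ, Real.cos ⟪η, ξ⟫ * Wfun x v ξ * f ‖c₂⁻¹ • ξ‖ := by
    rw [← hcov c₂ hc₂ (fun ξ => Real.cos ⟪η, ξ⟫ * Wfun x v ξ * f ‖c₂⁻¹ • ξ‖)]
    refine integral_congr_ae (Filter.Eventually.of_forall fun ω => ?_)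
    simp only [hsm c₂ hc₂.ne' ω]
  -- integrability after change of variables
  have hIF1 : Integrable (fun ξ : EuclideanSpace ℝ (Fin d) => Wfun x v ξ * f ‖c₁⁻¹ • ξ‖) :=
    aux_integrable hfInt (Wfun_cont x v) B
      (fun ξ => by rw [abs_of_nonneg (Wfun_nonneg _ _ _)]; exact Wfun_le _ _ _)
      (inv_ne_zero hc₁.ne')
  have hIF2 : Integrable (fun ξ : EuclideanSpace ℝ (Fin d) =>
      Real.cos ⟪η, ξ⟫ * Wfun x v ξ * f ‖c₂⁻¹ • ξ‖) := by
    have := aux_integrable hfInt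
      ((Real.continuous_cos.comp (continuous_const.inner continuous_id)).mul (Wfun_cont x v)) B
      (fun ξ => by
        show |Real.cos ⟪η, ξ⟫ * Wfun x v ξ| ≤ B
        rw [abs_mul, abs_of_nonneg (Wfun_nonneg _ _ _)]
        have hBnn : (0:ℝ) ≤ B := by positivity
        calc |Real.cos ⟪η, ξ⟫| * Wfun x v ξ ≤ 1 * B :=
              mul_le_mul (Real.abs_cos_le_one _) (Wfun_le _ _ _) (Wfun_nonneg _ _ _) zero_le_one
          _ = B := one_mul B)
      (inv_ne_zero hc₂.ne')
    exact this
  -- the key constant inequality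
  have hK : b₂ * (c₂ ^ d)⁻¹ ≤ b₁ * (c₁ ^ d)⁻¹ := by
    have hpow : (a₁ / a₂) ^ ((d : ℝ) / 2) = c₁ ^ d / c₂ ^ d := by
      have hq : (0:ℝ) ≤ a₁ / a₂ := div_nonneg ha₁.le ha₂.le
      calc (a₁ / a₂) ^ ((d : ℝ) / 2) = ((a₁ / a₂) ^ ((1:ℝ)/2)) ^ (d : ℕ) := by
            rw [← Real.rpow_natCast ((a₁ / a₂) ^ ((1:ℝ)/2)) d, ← Real.rpow_mul hq]
            congr 1; ring
        _ = Real.sqrt (a₁ / a₂) ^ d := by rw [Real.sqrt_eq_rpow]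
        _ = (c₁ / c₂) ^ d := by rw [hc₁def, hc₂def, ← Real.sqrt_div ha₁.le]
        _ = c₁ ^ d / c₂ ^ d := div_pow _ _ _
    have hc₁d : (0:ℝ) < c₁ ^ d := pow_pos hc₁ d
    have hc₂d : (0:ℝ) < c₂ ^ d := pow_pos hc₂ d
    have h1 : b₂ * (a₁ / a₂) ^ ((d : ℝ) / 2) * (c₁ ^ d)⁻¹ ≤ b₁ * (c₁ ^ d)⁻¹ :=
      mul_le_mul_of_nonneg_right hcond (inv_nonneg.2 hc₁d.le)
    calc b₂ * (c₂ ^ d)⁻¹ = b₂ * (a₁ / a₂) ^ ((d : ℝ) / 2) * (c₁ ^ d)⁻¹ := by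
          rw [hpow]; field_simp
      _ ≤ b₁ * (c₁ ^ d)⁻¹ := h1
  -- pointwise nonnegativity of the final integrand
  have hnn : ∀ ξ : EuclideanSpace ℝ (Fin d),
      0 ≤ b₁ * (c₁ ^ d)⁻¹ * (Wfun x v ξ * f ‖c₁⁻¹ • ξ‖)
        - b₂ * (c₂ ^ d)⁻¹ * (Real.cos ⟪η, ξ⟫ * Wfun x v ξ * f ‖c₂⁻¹ • ξ‖) := by
    intro ξ
    set k₁ := b₁ * (c₁ ^ d)⁻¹ with hk₁
    set k₂ := b₂ * (c₂ ^ d)⁻¹ with hk₂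
    have hk₂nn : 0 ≤ k₂ := mul_nonneg hb₂ (inv_nonneg.2 (pow_pos hc₂ d).le)
    have hW := Wfun_nonneg x v ξ
    have hn1 : ‖c₁⁻¹ • ξ‖ = c₁⁻¹ * ‖ξ‖ := by
      rw [norm_smul, Real.norm_eq_abs, abs_of_pos (inv_pos.2 hc₁)]
    have hn2 : ‖c₂⁻¹ • ξ‖ = c₂⁻¹ * ‖ξ‖ := by
      rw [norm_smul, Real.norm_eq_abs, abs_of_pos (inv_pos.2 hc₂)]
    have hu : c₁⁻¹ * ‖ξ‖ ≤ c₂⁻¹ * ‖ξ‖ :=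
      mul_le_mul_of_nonneg_right (inv_anti₀ hc₂ hc₂₁) (norm_nonneg ξ)
    have hmem1 : c₁⁻¹ * ‖ξ‖ ∈ Set.Ici (0:ℝ) :=
      mul_nonneg (inv_pos.2 hc₁).le (norm_nonneg ξ)
    have hmem2 : c₂⁻¹ * ‖ξ‖ ∈ Set.Ici (0:ℝ) :=
      mul_nonneg (inv_pos.2 hc₂).le (norm_nonneg ξ)
    have hf21 : f (c₂⁻¹ * ‖ξ‖) ≤ f (c₁⁻¹ * ‖ξ‖) := hfmono hmem1 hmem2 hu
    have hfu1 : 0 ≤ f (c₁⁻¹ * ‖ξ‖) := hf0 _ hmem1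
    have hfu2 : 0 ≤ f (c₂⁻¹ * ‖ξ‖) := hf0 _ hmem2
    rw [hn1, hn2]
    have hcos1 : Real.cos ⟪η, ξ⟫ ≤ 1 := Real.cos_le_one _
    have t1 : k₂ * (Real.cos ⟪η, ξ⟫ * Wfun x v ξ * f (c₂⁻¹ * ‖ξ‖))
        ≤ k₂ * (Wfun x v ξ * f (c₂⁻¹ * ‖ξ‖)) := by
      apply mul_le_mul_of_nonneg_left _ hk₂nn
      have := mul_le_mul_of_nonneg_right hcos1 (mul_nonneg hW hfu2)
      calc Real.cos ⟪η, ξ⟫ * Wfun x v ξ * f (c₂⁻¹ * ‖ξ‖)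
          = Real.cos ⟪η, ξ⟫ * (Wfun x v ξ * f (c₂⁻¹ * ‖ξ‖)) := by ring
        _ ≤ 1 * (Wfun x v ξ * f (c₂⁻¹ * ‖ξ‖)) := this
        _ = Wfun x v ξ * f (c₂⁻¹ * ‖ξ‖) := one_mul _
    have t2 : k₂ * (Wfun x v ξ * f (c₂⁻¹ * ‖ξ‖)) ≤ k₂ * (Wfun x v ξ * f (c₁⁻¹ * ‖ξ‖)) :=
      mul_le_mul_of_nonneg_left (mul_le_mul_of_nonneg_left hf21 hW) hk₂nn
    have t3 : k₂ * (Wfun x v ξ * f (c₁⁻¹ * ‖ξ‖)) ≤ k₁ * (Wfun x v ξ * f (c₁⁻¹ * ‖ξ‖)) :=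
      mul_le_mul_of_nonneg_right hK (mul_nonneg hW hfu1)
    linarith
  -- put everything together
  have final : ∑ i, ∑ j, v i * v j *
      (b₁ * φ (c₁ * ‖x i - x j‖) -
        b₂ / 2 * (φ (c₂ * ‖x i - x j - η‖) + φ (c₂ * ‖x i - x j + η‖)))
      = ∫ ξ, (b₁ * (c₁ ^ d)⁻¹ * (Wfun x v ξ * f ‖c₁⁻¹ • ξ‖)
          - b₂ * (c₂ ^ d)⁻¹ * (Real.cos ⟪η, ξ⟫ * Wfun x v ξ * f ‖c₂⁻¹ • ξ‖)) := by
    have hA : Integrable (fun ω : EuclideanSpace ℝ (Fin d) =>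
        b₁ * (Wfun x v (c₁ • ω) * f ‖ω‖)) := hI1.const_mul b₁
    have hB : Integrable (fun ω : EuclideanSpace ℝ (Fin d) =>
        b₂ * (Real.cos ⟪η, c₂ • ω⟫ * Wfun x v (c₂ • ω) * f ‖ω‖)) := hI2.const_mul b₂
    have hA' : Integrable (fun ξ : EuclideanSpace ℝ (Fin d) =>
        (b₁ * (c₁ ^ d)⁻¹) * (Wfun x v ξ * f ‖c₁⁻¹ • ξ‖)) := hIF1.const_mul _
    have hB' : Integrable (fun ξ : EuclideanSpace ℝ (Fin d) =>
        (b₂ * (c₂ ^ d)⁻¹) * (Real.cos ⟪η, ξ⟫ * Wfun x v ξ * f ‖c₂⁻¹ • ξ‖)) := hIF2.const_mul _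
    rw [hS, integral_sub hA hB, integral_const_mul, integral_const_mul, hcov1, hcov2,
      integral_sub hA' hB', integral_const_mul, integral_const_mul]
    ring
  calc (0:ℝ) ≤ ∫ ξ, (b₁ * (c₁ ^ d)⁻¹ * (Wfun x v ξ * f ‖c₁⁻¹ • ξ‖)
          - b₂ * (c₂ ^ d)⁻¹ * (Real.cos ⟪η, ξ⟫ * Wfun x v ξ * f ‖c₂⁻¹ • ξ‖)) :=
        integral_nonneg hnn
    _ = _ := final.symm
end
end

section
/- Let d ≥ 1, let φ₁, φ₂ ∈ Φ_d, and assume that the map h ↦ φ₂(‖h‖) is twice continuously differentiable on ℝ^d. Let u be a unit vector in ℝ^d, and let a₁, a₂ > 0 and b₁, b₂ ≥ 0 be constants. Then the function T : ℝ^d → ℝ defined by T(h) = b₁ φ₁(√a₁ ‖h‖) − b₂ [ cos²θ(h,u) · φ₂''(√a₂ ‖h‖) + sin²θ(h,u) · φ₂'(√a₂ ‖h‖)/(√a₂ ‖h‖) ] for h ≠ 0, and T(0) = b₁ φ₁(0) − b₂ φ₂''(0), is a stationary covariance function on ℝ^d. -/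
open MeasureTheory
open scoped BigOperators RealInnerProductSpace

noncomputable section

open Filter Topology

section Aux

variable {d : ℕ}

lemma psd_scale {d : ℕ} {φ : ℝ → ℝ}
    (h : IsStationaryCovariance d (fun h => φ ‖h‖)) {c : ℝ} (hc : 0 ≤ c) :
    IsStationaryCovariance d (fun h => φ (c * ‖h‖)) := by
  intro n x v
  have := h n (fun i => c • x i) v
  simpa [← smul_sub, norm_smul, abs_of_nonneg hc] using this

lemma psd_diff {d : ℕ} {C : EuclideanSpace ℝ (Fin d) → ℝ} (hC : IsStationaryCovariance d C)
    (w : EuclideanSpace ℝ (Fin d)) :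
    IsStationaryCovariance d (fun h => 2 * C h - C (h + w) - C (h - w)) := by
  intro n x v
  have key := hC (n + n) (Fin.addCases x (fun i => x i + w)) (Fin.addCases v (fun i => -v i))
  simp only [Fin.sum_univ_add, Fin.addCases_left, Fin.addCases_right] at key
  have e1 : ∀ i j : Fin n, x i + w - (x j + w) = x i - x j := fun i j => by abel
  have e2 : ∀ i j : Fin n, x i - (x j + w) = x i - x j - w := fun i j => by abel
  have e3 : ∀ i j : Fin n, x i + w - x j = x i - x j + w := fun i j => by abel
  have e : (∑ i, ∑ j, v i * v j * (2 * C (x i - x j) - C (x i - x j + w) - C (x i - x j - w)))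
      = (∑ i, (∑ j, v i * v j * C (x i - x j) + ∑ j, v i * -v j * C (x i - (x j + w))))
      + ∑ i, (∑ j, -v i * v j * C (x i + w - x j) + ∑ j, -v i * -v j * C (x i + w - (x j + w))) := by
    rw [← Finset.sum_add_distrib]
    refine Finset.sum_congr rfl fun i _ => ?_
    rw [← Finset.sum_add_distrib, ← Finset.sum_add_distrib, ← Finset.sum_add_distrib]
    refine Finset.sum_congr rfl fun j _ => ?_
    rw [e1, e2, e3]; ring
  rw [e]; exact key

lemma psd_limit {d : ℕ} {C : ℕ → EuclideanSpace ℝ (Fin d) → ℝ} {T : EuclideanSpace ℝ (Fin d) → ℝ}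
    (hC : ∀ m, IsStationaryCovariance d (C m))
    (hlim : ∀ h, Filter.Tendsto (fun m => C m h) Filter.atTop (nhds (T h))) :
    IsStationaryCovariance d T := by
  intro n x v
  have : Filter.Tendsto (fun m => ∑ i, ∑ j, v i * v j * C m (x i - x j)) Filter.atTop
      (nhds (∑ i, ∑ j, v i * v j * T (x i - x j))) := by
    refine tendsto_finset_sum _ fun i _ => tendsto_finset_sum _ fun j _ => ?_
    exact Filter.Tendsto.const_mul _ (hlim _)
  exact ge_of_tendsto this (Filter.Eventually.of_forall fun m => hC m n x v)

lemma sdq (ψ : ℝ → ℝ) (hψ : ContDiff ℝ 2 ψ) :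
    Tendsto (fun ε => (2 * ψ 0 - ψ ε - ψ (-ε)) / ε ^ 2) (𝓝[>] (0:ℝ))
      (𝓝 (-(deriv (deriv ψ) 0))) := by
  have h2 : ContDiff ℝ ((1:WithTop ℕ∞)+1) ψ := by norm_num; exact hψ
  have hd1 : Differentiable ℝ ψ := (contDiff_succ_iff_deriv.mp h2).1
  have hd2' : Differentiable ℝ (deriv ψ) := by
    have h1 : ContDiff ℝ ((0:WithTop ℕ∞)+1) (deriv ψ) := by
      have := (contDiff_succ_iff_deriv.mp h2).2.2
      norm_num at this ⊢; exact this
    exact (contDiff_succ_iff_deriv.mp h1).1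
  set L := deriv (deriv ψ) 0 with hL
  have hslope : Tendsto (fun t : ℝ => (deriv ψ t - deriv ψ 0) / t) (𝓝[≠] (0:ℝ)) (𝓝 L) := by
    have h := (hd2' 0).hasDerivAt
    rw [hasDerivAt_iff_tendsto_slope] at h
    refine h.congr fun t => ?_
    simp [slope_def_field]
  have hf' : ∀ ε : ℝ, HasDerivAt (fun ε => 2 * ψ 0 - ψ ε - ψ (-ε))
      (-(deriv ψ ε) + deriv ψ (-ε)) ε := by
    intro ε
    have hneg : HasDerivAt (fun ε : ℝ => ψ (-ε)) (deriv ψ (-ε) * (-1)) ε :=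
      (hd1 (-ε)).hasDerivAt.comp ε (hasDerivAt_neg ε)
    have := ((hasDerivAt_const ε (2 * ψ 0)).fun_sub (hd1 ε).hasDerivAt).fun_sub hneg
    exact this.congr_deriv (by ring)
  have hg' : ∀ ε : ℝ, HasDerivAt (fun ε : ℝ => ε ^ 2) (2 * ε) ε := by
    intro ε; simpa using hasDerivAt_pow 2 ε
  have hmono : 𝓝[>] (0:ℝ) ≤ 𝓝[≠] (0:ℝ) :=
    nhdsWithin_mono _ fun t ht => ne_of_gt ht
  have hnegmap : Tendsto (fun ε : ℝ => -ε) (𝓝[>] (0:ℝ)) (𝓝[≠] (0:ℝ)) := by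
    apply tendsto_nhdsWithin_of_tendsto_nhds_of_eventually_within
    · simpa using (tendsto_neg_nhdsGT (a := (0:ℝ))).mono_right nhdsWithin_le_nhds
    · filter_upwards [self_mem_nhdsWithin] with ε (hε : 0 < ε)
      simpa using ne_of_lt (neg_neg_iff_pos.mpr hε)
  have hquot : Tendsto (fun ε : ℝ => (-(deriv ψ ε) + deriv ψ (-ε)) / (2 * ε)) (𝓝[>] (0:ℝ))
      (𝓝 (-L)) := by
    have hA : Tendsto (fun ε : ℝ => (deriv ψ ε - deriv ψ 0) / ε) (𝓝[>] (0:ℝ)) (𝓝 L) :=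
      hslope.mono_left hmono
    have hB : Tendsto (fun ε : ℝ => (deriv ψ (-ε) - deriv ψ 0) / (-ε)) (𝓝[>] (0:ℝ)) (𝓝 L) :=
      hslope.comp hnegmap
    have := (hA.add hB).const_mul (-(1:ℝ)/2)
    have heq : (fun ε : ℝ => -(1:ℝ)/2 * ((deriv ψ ε - deriv ψ 0) / ε + (deriv ψ (-ε) - deriv ψ 0) / (-ε)))
        =ᶠ[𝓝[>] (0:ℝ)] fun ε => (-(deriv ψ ε) + deriv ψ (-ε)) / (2 * ε) := by
      filter_upwards [self_mem_nhdsWithin] with ε (hε : 0 < ε)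
      field_simp
      ring
    have hval : -(1:ℝ)/2 * (L + L) = -L := by ring
    rw [hval] at this
    exact this.congr' heq
  have main := HasDerivAt.lhopital_zero_nhdsGT
    (f := fun ε => 2 * ψ 0 - ψ ε - ψ (-ε)) (g := fun ε : ℝ => ε ^ 2)
    (f' := fun ε => -(deriv ψ ε) + deriv ψ (-ε)) (g' := fun ε => 2 * ε)
    (Eventually.of_forall hf') (Eventually.of_forall hg')
    ?_ ?_ ?_ hquot
  · exact main
  · filter_upwards [self_mem_nhdsWithin] with ε (hε : 0 < ε)
    positivity
  · have hc : Continuous fun ε => 2 * ψ 0 - ψ ε - ψ (-ε) := by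
      have := hd1.continuous
      continuity
    have h3 := (hc.tendsto 0).mono_left (nhdsWithin_le_nhds (s := Set.Ioi (0:ℝ)))
    simp only [neg_zero] at h3
    rw [show 2 * ψ 0 - ψ 0 - ψ 0 = 0 by ring] at h3
    exact h3
  · have := ((continuous_pow 2 (M := ℝ)).tendsto 0).mono_left
      (nhdsWithin_le_nhds (s := Set.Ioi (0:ℝ)))
    simpa using this

lemma p_eq_sq {a₂ : ℝ} (ha₂ : 0 < a₂) {u : EuclideanSpace ℝ (Fin d)} (hu : ‖u‖ = 1)
    (h : EuclideanSpace ℝ (Fin d)) (s : ℝ) :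
    a₂ * ‖h‖ ^ 2 + 2 * a₂ * ⟪h, u⟫ * s + a₂ * s ^ 2
      = (Real.sqrt a₂ * ‖h + s • u‖) ^ 2 := by
  rw [mul_pow, Real.sq_sqrt ha₂.le, norm_add_sq_real, real_inner_smul_right, norm_smul, hu]
  simp [mul_pow, sq_abs]
  ring

lemma sqrt_p {a₂ : ℝ} (ha₂ : 0 < a₂) {u : EuclideanSpace ℝ (Fin d)} (hu : ‖u‖ = 1)
    (h : EuclideanSpace ℝ (Fin d)) (s : ℝ) :
    Real.sqrt (a₂ * ‖h‖ ^ 2 + 2 * a₂ * ⟪h, u⟫ * s + a₂ * s ^ 2)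
      = Real.sqrt a₂ * ‖h + s • u‖ := by
  rw [p_eq_sq ha₂ hu, Real.sqrt_sq (by positivity)]

lemma psi_deriv {a₂ : ℝ} (ha₂ : 0 < a₂) {u : EuclideanSpace ℝ (Fin d)} (hu : ‖u‖ = 1)
    {φ₂ φ₂' : ℝ → ℝ} (hderiv1 : ∀ t ∈ Set.Ioi (0 : ℝ), HasDerivAt φ₂ (φ₂' t) t)
    (h : EuclideanSpace ℝ (Fin d)) (s : ℝ) (hs : h + s • u ≠ 0) :
    HasDerivAt (fun s => φ₂ (Real.sqrt a₂ * ‖h + s • u‖))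
      (φ₂' (Real.sqrt a₂ * ‖h + s • u‖) *
        (a₂ * (⟪h, u⟫ + s) / (Real.sqrt a₂ * ‖h + s • u‖))) s := by
  set c : ℝ := ⟪h, u⟫ with hc
  set p : ℝ → ℝ := fun t => a₂ * ‖h‖ ^ 2 + 2 * a₂ * c * t + a₂ * t ^ 2 with hp_def
  have hpeq : ∀ t, Real.sqrt (p t) = Real.sqrt a₂ * ‖h + t • u‖ := fun t =>
    sqrt_p ha₂ hu h t
  have hRpos : 0 < Real.sqrt a₂ * ‖h + s • u‖ := by
    have : 0 < ‖h + s • u‖ := norm_pos_iff.mpr hs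
    positivity
  have hppos : 0 < p s := by
    rw [hp_def]; dsimp only; rw [p_eq_sq ha₂ hu]; positivity
  have hp' : HasDerivAt p (2 * a₂ * c + a₂ * (2 * s)) s := by
    have h1 : HasDerivAt (fun t : ℝ => t ^ 2) (2 * s) s := by simpa using hasDerivAt_pow 2 s
    have h2 : HasDerivAt (fun t : ℝ => 2 * a₂ * c * t) (2 * a₂ * c) s := by
      simpa using (hasDerivAt_id s).const_mul (2 * a₂ * c)
    have := ((hasDerivAt_const s (a₂ * ‖h‖ ^ 2)).fun_add h2).fun_add ((h1.const_mul a₂))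
    simpa using this
  have hsq : HasDerivAt (fun t => Real.sqrt (p t))
      (1 / (2 * Real.sqrt (p s)) * (2 * a₂ * c + a₂ * (2 * s))) s :=
    (Real.hasDerivAt_sqrt hppos.ne').comp s hp'
  have hφ : HasDerivAt φ₂ (φ₂' (Real.sqrt (p s))) (Real.sqrt (p s)) := by
    apply hderiv1
    rw [hpeq s]; exact hRpos
  have hmain := hφ.comp s hsq
  simp only [Function.comp_def, hpeq] at hmain
  refine hmain.congr_deriv ?_
  rw [← hpeq s] at hRpos ⊢
  field_simp

lemma psi_deriv2 {a₂ : ℝ} (ha₂ : 0 < a₂) {u : EuclideanSpace ℝ (Fin d)} (hu : ‖u‖ = 1)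
    {φ₂ φ₂' φ₂'' : ℝ → ℝ} (hderiv1 : ∀ t ∈ Set.Ioi (0 : ℝ), HasDerivAt φ₂ (φ₂' t) t)
    (hderiv2 : ∀ t ∈ Set.Ioi (0 : ℝ), HasDerivAt φ₂' (φ₂'' t) t)
    (h : EuclideanSpace ℝ (Fin d)) (hh : h ≠ 0) :
    deriv (deriv (fun s : ℝ => φ₂ (Real.sqrt a₂ * ‖h + s • u‖))) 0
      = a₂ * ((⟪h, u⟫ / ‖h‖) ^ 2 * φ₂'' (Real.sqrt a₂ * ‖h‖) +
          (1 - (⟪h, u⟫ / ‖h‖) ^ 2) * (φ₂' (Real.sqrt a₂ * ‖h‖) / (Real.sqrt a₂ * ‖h‖))) := by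
  set c : ℝ := ⟪h, u⟫ with hc
  set G : ℝ → ℝ := fun s => φ₂' (Real.sqrt a₂ * ‖h + s • u‖) *
      (a₂ * (c + s) / (Real.sqrt a₂ * ‖h + s • u‖)) with hG_def
  have hcont : Continuous (fun s : ℝ => h + s • u) := by continuity
  have hopen : ∀ᶠ s in 𝓝 (0:ℝ), h + s • u ≠ 0 := by
    have ht : Tendsto (fun s : ℝ => h + s • u) (𝓝 0) (𝓝 h) := by
      simpa using hcont.tendsto 0
    exact ht.eventually (eventually_ne_nhds hh)
  have hev : deriv (fun s : ℝ => φ₂ (Real.sqrt a₂ * ‖h + s • u‖)) =ᶠ[𝓝 (0:ℝ)] G := by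
    filter_upwards [hopen] with s hs
    exact (psi_deriv ha₂ hu hderiv1 h s hs).deriv
  have key : deriv (deriv (fun s : ℝ => φ₂ (Real.sqrt a₂ * ‖h + s • u‖))) 0 = deriv G 0 :=
    hev.deriv_eq
  have hnh : (0:ℝ) < ‖h‖ := norm_pos_iff.mpr hh
  have hRpos : 0 < Real.sqrt a₂ * ‖h‖ := by positivity
  have hp' : HasDerivAt (fun t : ℝ => a₂ * ‖h‖ ^ 2 + 2 * a₂ * c * t + a₂ * t ^ 2)
      (2 * a₂ * c + a₂ * (2 * 0)) 0 := by
    have h1 : HasDerivAt (fun t : ℝ => t ^ 2) (2 * 0) (0:ℝ) := by simpa using hasDerivAt_pow 2 (0:ℝ)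
    have h2 : HasDerivAt (fun t : ℝ => 2 * a₂ * c * t) (2 * a₂ * c) (0:ℝ) := by
      simpa using (hasDerivAt_id (0:ℝ)).const_mul (2 * a₂ * c)
    have := ((hasDerivAt_const (0:ℝ) (a₂ * ‖h‖ ^ 2)).fun_add h2).fun_add (h1.const_mul a₂)
    simpa using this
  have hppos : (0:ℝ) < a₂ * ‖h‖ ^ 2 + 2 * a₂ * c * 0 + a₂ * 0 ^ 2 := by
    have : a₂ * ‖h‖ ^ 2 + 2 * a₂ * c * 0 + a₂ * 0 ^ 2 = a₂ * ‖h‖^2 := by ring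
    rw [this]; positivity
  have hr : HasDerivAt (fun s : ℝ => Real.sqrt a₂ * ‖h + s • u‖)
      (1 / (2 * (Real.sqrt a₂ * ‖h‖)) * (2 * a₂ * c + a₂ * (2 * 0))) 0 := by
    have := (Real.hasDerivAt_sqrt hppos.ne').comp 0 hp'
    simp only [Function.comp_def, hc, sqrt_p ha₂ hu] at this
    simpa [hc] using this
  set r' : ℝ := 1 / (2 * (Real.sqrt a₂ * ‖h‖)) * (2 * a₂ * c + a₂ * (2 * 0)) with hr'_def
  have h1 : HasDerivAt (fun s : ℝ => φ₂' (Real.sqrt a₂ * ‖h + s • u‖))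
      (φ₂'' (Real.sqrt a₂ * ‖h‖) * r') 0 := by
    have hφ : HasDerivAt φ₂' (φ₂'' (Real.sqrt a₂ * ‖h‖)) ((fun s : ℝ => Real.sqrt a₂ * ‖h + s • u‖) 0) := by
      show HasDerivAt φ₂' _ (Real.sqrt a₂ * ‖h + (0:ℝ) • u‖)
      rw [zero_smul, add_zero]
      exact hderiv2 _ hRpos
    have := hφ.comp 0 hr
    simpa [Function.comp_def] using this
  have h2 : HasDerivAt (fun s : ℝ => a₂ * (c + s)) a₂ 0 := by
    simpa using ((hasDerivAt_const (0:ℝ) c).add (hasDerivAt_id (0:ℝ))).const_mul a₂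
  have h3 : HasDerivAt (fun s : ℝ => a₂ * (c + s) / (Real.sqrt a₂ * ‖h + s • u‖))
      ((a₂ * (Real.sqrt a₂ * ‖h‖) - a₂ * (c + 0) * r') / (Real.sqrt a₂ * ‖h‖) ^ 2) 0 := by
    have := h2.fun_div (by simpa using hr) (by simpa using hRpos.ne')
    simpa using this
  have hG : HasDerivAt G
      (φ₂'' (Real.sqrt a₂ * ‖h‖) * r' * (a₂ * (c + 0) / (Real.sqrt a₂ * ‖h‖)) +
        φ₂' (Real.sqrt a₂ * ‖h‖) *
          ((a₂ * (Real.sqrt a₂ * ‖h‖) - a₂ * (c + 0) * r') / (Real.sqrt a₂ * ‖h‖) ^ 2)) 0 := by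
    have := h1.fun_mul h3
    simpa using this
  rw [key, hG.deriv, hr'_def]
  set A := Real.sqrt a₂ with hA
  have hA2 : A ^ 2 = a₂ := Real.sq_sqrt ha₂.le
  have hApos : 0 < A := Real.sqrt_pos.mpr ha₂
  rw [← hA2]
  field_simp
  ring

lemma psi_deriv2_zero {a₂ : ℝ} (ha₂ : 0 < a₂) {u : EuclideanSpace ℝ (Fin d)} (hu : ‖u‖ = 1)
    {φ₂ φ₂' φ₂'' : ℝ → ℝ} (hderiv1 : ∀ t ∈ Set.Ioi (0 : ℝ), HasDerivAt φ₂ (φ₂' t) t)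
    (hderiv2 : ∀ t ∈ Set.Ioi (0 : ℝ), HasDerivAt φ₂' (φ₂'' t) t)
    (hcont2 : ContinuousOn φ₂'' (Set.Ici 0))
    (hψ : ContDiff ℝ 2 (fun s : ℝ => φ₂ (Real.sqrt a₂ * ‖(0 : EuclideanSpace ℝ (Fin d)) + s • u‖))) :
    deriv (deriv (fun s : ℝ => φ₂ (Real.sqrt a₂ * ‖(0 : EuclideanSpace ℝ (Fin d)) + s • u‖))) 0
      = a₂ * φ₂'' 0 := by
  set ψ : ℝ → ℝ := fun s : ℝ => φ₂ (Real.sqrt a₂ * ‖(0 : EuclideanSpace ℝ (Fin d)) + s • u‖)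
    with hψ_def
  have hApos : 0 < Real.sqrt a₂ := Real.sqrt_pos.mpr ha₂
  have hune : u ≠ 0 := by intro hc; rw [hc] at hu; simp at hu
  have step1 : ∀ s₀ ∈ Set.Ioi (0:ℝ), deriv (deriv ψ) s₀ = a₂ * φ₂'' (Real.sqrt a₂ * s₀) := by
    intro s₀ hs₀
    have hopen : ∀ᶠ s in 𝓝 s₀, (0:ℝ) < s := eventually_gt_nhds hs₀
    have hev1 : deriv ψ =ᶠ[𝓝 s₀] fun s => Real.sqrt a₂ * φ₂' (Real.sqrt a₂ * s) := by
      filter_upwards [hopen] with s hs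
      have hne : (0 : EuclideanSpace ℝ (Fin d)) + s • u ≠ 0 := by
        rw [zero_add]; exact smul_ne_zero (ne_of_gt hs) hune
      have hd := (psi_deriv ha₂ hu hderiv1 0 s hne).deriv
      rw [hψ_def, hd]
      have hnrm : ‖(0 : EuclideanSpace ℝ (Fin d)) + s • u‖ = s := by
        rw [zero_add, norm_smul, hu, mul_one, Real.norm_eq_abs, abs_of_pos hs]
      rw [hnrm]
      simp only [inner_zero_left, zero_add]
      rw [mul_comm (Real.sqrt a₂) (φ₂' (Real.sqrt a₂ * s))]
      congr 1
      field_simp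
      have hm : Real.sqrt a₂ * Real.sqrt a₂ = a₂ := Real.mul_self_sqrt ha₂.le
      linear_combination -hm
    have hd2 : HasDerivAt (fun s => Real.sqrt a₂ * φ₂' (Real.sqrt a₂ * s))
        (Real.sqrt a₂ * (φ₂'' (Real.sqrt a₂ * s₀) * (Real.sqrt a₂ * 1))) s₀ := by
      have hin : HasDerivAt (fun s : ℝ => Real.sqrt a₂ * s) (Real.sqrt a₂ * 1) s₀ :=
        (hasDerivAt_id s₀).const_mul (Real.sqrt a₂)
      have hs₀' : (0:ℝ) < s₀ := Set.mem_Ioi.mp hs₀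
      have hout := (hderiv2 (Real.sqrt a₂ * s₀) (Set.mem_Ioi.mpr (by positivity))).comp s₀ hin
      exact hout.const_mul (Real.sqrt a₂)
    rw [hev1.deriv_eq, hd2.deriv]
    have hm : Real.sqrt a₂ * Real.sqrt a₂ = a₂ := Real.mul_self_sqrt ha₂.le
    linear_combination φ₂'' (Real.sqrt a₂ * s₀) * hm
  have h2 : ContDiff ℝ ((1:WithTop ℕ∞)+1) ψ := by norm_num; exact hψ
  have hc2 : Continuous (deriv (deriv ψ)) := by
    have h1 : ContDiff ℝ ((0:WithTop ℕ∞)+1) (deriv ψ) := by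
      have := (contDiff_succ_iff_deriv.mp h2).2.2
      norm_num at this ⊢; exact this
    have h0 := (contDiff_succ_iff_deriv.mp h1).2.2
    norm_num at h0
    exact h0
  have t1 : Tendsto (deriv (deriv ψ)) (𝓝[>] (0:ℝ)) (𝓝 (deriv (deriv ψ) 0)) :=
    (hc2.tendsto 0).mono_left nhdsWithin_le_nhds
  have t2 : Tendsto (deriv (deriv ψ)) (𝓝[>] (0:ℝ)) (𝓝 (a₂ * φ₂'' 0)) := by
    have hmap : Tendsto (fun s : ℝ => Real.sqrt a₂ * s) (𝓝[>] (0:ℝ)) (𝓝[Set.Ici 0] 0) := by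
      apply tendsto_nhdsWithin_of_tendsto_nhds_of_eventually_within
      · have hcm : Continuous fun s : ℝ => Real.sqrt a₂ * s := continuous_const.mul continuous_id
        have := hcm.tendsto 0
        simpa using this.mono_left (nhdsWithin_le_nhds (s := Set.Ioi (0:ℝ)))
      · filter_upwards [self_mem_nhdsWithin] with s (hs : 0 < s)
        exact Set.mem_Ici.mpr (by positivity)
    have hφc : Tendsto φ₂'' (𝓝[Set.Ici 0] (0:ℝ)) (𝓝 (φ₂'' 0)) :=
      hcont2 0 Set.self_mem_Ici
    have := (hφc.comp hmap).const_mul a₂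
    refine this.congr' ?_
    filter_upwards [self_mem_nhdsWithin] with s (hs : 0 < s)
    exact (step1 s hs).symm
  exact tendsto_nhds_unique t1 t2

end Aux

theorem statement_4 (d : ℕ) (hd : 1 ≤ d) (φ₁ φ₂ φ₂' φ₂'' : ℝ → ℝ)
    (hφ₁ : MemPhi d φ₁) (hφ₂ : MemPhi d φ₂)
    (hsmooth : ContDiff ℝ 2 (fun h : EuclideanSpace ℝ (Fin d) => φ₂ ‖h‖))
    (hderiv1 : ∀ t ∈ Set.Ioi (0 : ℝ), HasDerivAt φ₂ (φ₂' t) t)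
    (hderiv2 : ∀ t ∈ Set.Ioi (0 : ℝ), HasDerivAt φ₂' (φ₂'' t) t)
    (hcont1 : ContinuousOn φ₂' (Set.Ici 0)) (hcont2 : ContinuousOn φ₂'' (Set.Ici 0))
    (u : EuclideanSpace ℝ (Fin d)) (hu : ‖u‖ = 1)
    (a₁ a₂ b₁ b₂ : ℝ) (ha₁ : 0 < a₁) (ha₂ : 0 < a₂) (hb₁ : 0 ≤ b₁) (hb₂ : 0 ≤ b₂)
    (T : EuclideanSpace ℝ (Fin d) → ℝ)
    (hT0 : T 0 = b₁ * φ₁ 0 - b₂ * φ₂'' 0)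
    (hT : ∀ h : EuclideanSpace ℝ (Fin d), h ≠ 0 →
      T h = b₁ * φ₁ (Real.sqrt a₁ * ‖h‖) -
        b₂ * (((⟪h, u⟫ : ℝ) / ‖h‖) ^ 2 * φ₂'' (Real.sqrt a₂ * ‖h‖) +
          (1 - ((⟪h, u⟫ : ℝ) / ‖h‖) ^ 2) *
            (φ₂' (Real.sqrt a₂ * ‖h‖) / (Real.sqrt a₂ * ‖h‖)))) :
    IsStationaryCovariance d T := by
  classical
  set C₁ : EuclideanSpace ℝ (Fin d) → ℝ := fun h => φ₁ (Real.sqrt a₁ * ‖h‖) with hC₁_def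
  set C₂ : EuclideanSpace ℝ (Fin d) → ℝ := fun h => φ₂ (Real.sqrt a₂ * ‖h‖) with hC₂_def
  have hC₁ : IsStationaryCovariance d C₁ := psd_scale hφ₁.2 (Real.sqrt_nonneg a₁)
  have hC₂ : IsStationaryCovariance d C₂ := psd_scale hφ₂.2 (Real.sqrt_nonneg a₂)
  have hC₂smooth : ContDiff ℝ 2 C₂ := by
    have h1 : ContDiff ℝ 2 (fun h : EuclideanSpace ℝ (Fin d) => φ₂ ‖Real.sqrt a₂ • h‖) :=
      hsmooth.comp (contDiff_const.fun_smul contDiff_id)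
    have h2 : (fun h : EuclideanSpace ℝ (Fin d) => φ₂ ‖Real.sqrt a₂ • h‖) = C₂ := by
      funext h
      rw [hC₂_def]
      rw [norm_smul, Real.norm_eq_abs, abs_of_nonneg (Real.sqrt_nonneg _)]
    rwa [h2] at h1
  -- the one-dimensional sections
  set ψ : EuclideanSpace ℝ (Fin d) → ℝ → ℝ := fun h s => φ₂ (Real.sqrt a₂ * ‖h + s • u‖) with hψ_def
  have hψsmooth : ∀ h : EuclideanSpace ℝ (Fin d), ContDiff ℝ 2 (ψ h) := by
    intro h
    have : ContDiff ℝ 2 fun s : ℝ => C₂ (h + s • u) :=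
      hC₂smooth.comp (contDiff_const.add (contDiff_id.smul contDiff_const))
    exact this
  set D : EuclideanSpace ℝ (Fin d) → ℝ := fun h => deriv (deriv (ψ h)) 0 with hD_def
  have ha₂' : a₂ ≠ 0 := ha₂.ne'
  have hTD : ∀ h : EuclideanSpace ℝ (Fin d), T h = b₁ * C₁ h - (b₂ / a₂) * D h := by
    intro h
    by_cases hh : h = 0
    · subst hh
      have hD0 : D 0 = a₂ * φ₂'' 0 :=
        psi_deriv2_zero ha₂ hu hderiv1 hderiv2 hcont2 (hψsmooth 0)
      rw [hT0, hD0, hC₁_def]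
      simp only [norm_zero, mul_zero]
      field_simp
    · have hDh := psi_deriv2 ha₂ hu hderiv1 hderiv2 h hh
      rw [hT h hh, hD_def]
      simp only []
      rw [hDh, hC₁_def]
      field_simp
  -- the approximating sequence
  set ε : ℕ → ℝ := fun m => 1 / (m + 1) with hε_def
  have hεpos : ∀ m, 0 < ε m := by
    intro m; rw [hε_def]; positivity
  set Cm : ℕ → EuclideanSpace ℝ (Fin d) → ℝ := fun m h => b₁ * C₁ h +
      (b₂ / a₂) * ((2 * C₂ h - C₂ (h + ε m • u) - C₂ (h - ε m • u)) / (ε m) ^ 2) with hCm_def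
  have hCmpsd : ∀ m, IsStationaryCovariance d (Cm m) := by
    intro m n x v
    have hFm := psd_diff hC₂ (ε m • u) n x v
    have hF1 := hC₁ n x v
    have hk : 0 ≤ (b₂ / a₂) / (ε m) ^ 2 := by positivity
    have e : (∑ i, ∑ j, v i * v j * Cm m (x i - x j))
        = b₁ * (∑ i, ∑ j, v i * v j * C₁ (x i - x j)) +
          ((b₂ / a₂) / (ε m) ^ 2) * (∑ i, ∑ j, v i * v j *
            (2 * C₂ (x i - x j) - C₂ (x i - x j + ε m • u) - C₂ (x i - x j - ε m • u))) := by
      rw [Finset.mul_sum, Finset.mul_sum, ← Finset.sum_add_distrib]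
      refine Finset.sum_congr rfl fun i _ => ?_
      rw [Finset.mul_sum, Finset.mul_sum, ← Finset.sum_add_distrib]
      refine Finset.sum_congr rfl fun j _ => ?_
      rw [hCm_def]
      have : (ε m) ^ 2 ≠ 0 := by positivity
      field_simp
    rw [e]
    exact add_nonneg (mul_nonneg hb₁ hF1) (mul_nonneg hk hFm)
  have hCmlim : ∀ h : EuclideanSpace ℝ (Fin d), Tendsto (fun m => Cm m h) atTop (𝓝 (T h)) := by
    intro h
    have hsdq := sdq (ψ h) (hψsmooth h)
    have hεtend : Tendsto ε atTop (𝓝[>] (0:ℝ)) := by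
      apply tendsto_nhdsWithin_of_tendsto_nhds_of_eventually_within
      · rw [hε_def]
        exact tendsto_one_div_add_atTop_nhds_zero_nat
      · exact Eventually.of_forall fun m => hεpos m
    have hcomp := hsdq.comp hεtend
    have hvals : ∀ m : ℕ, (2 * ψ h 0 - ψ h (ε m) - ψ h (-(ε m))) / (ε m) ^ 2
        = (2 * C₂ h - C₂ (h + ε m • u) - C₂ (h - ε m • u)) / (ε m) ^ 2 := by
      intro m
      have e0 : ψ h 0 = C₂ h := by rw [hψ_def]; simp; rfl
      have e1 : ψ h (ε m) = C₂ (h + ε m • u) := by rw [hψ_def]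
      have e2 : ψ h (-(ε m)) = C₂ (h - ε m • u) := by
        rw [hψ_def]; simp only [neg_smul]; rw [← sub_eq_add_neg]
      rw [e0, e1, e2]
    have hmain : Tendsto (fun m => b₁ * C₁ h + (b₂ / a₂) *
        ((2 * C₂ h - C₂ (h + ε m • u) - C₂ (h - ε m • u)) / (ε m) ^ 2)) atTop
        (𝓝 (b₁ * C₁ h + (b₂ / a₂) * (-(D h)))) := by
      refine tendsto_const_nhds.add (Tendsto.const_mul _ ?_)
      have : (fun m => (2 * C₂ h - C₂ (h + ε m • u) - C₂ (h - ε m • u)) / (ε m) ^ 2)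
          = fun m => (2 * ψ h 0 - ψ h (ε m) - ψ h (-(ε m))) / (ε m) ^ 2 := by
        funext m; rw [hvals m]
      rw [this]
      exact hcomp
    have hval : b₁ * C₁ h + (b₂ / a₂) * (-(D h)) = T h := by
      rw [hTD h]; ring
    rw [hval] at hmain
    exact hmain
  exact psd_limit hCmpsd hCmlim
end
end

section
/- Let d ≥ 1, let C₁ : ℝ^d → ℝ be a stationary covariance function, let φ₂ ∈ Φ_d be such that the map h ↦ φ₂(‖h‖) is twice continuously differentiable on ℝ^d, let u be a unit vector in ℝ^d, and let a₂ > 0 and b₁, b₂ ≥ 0 be constants. Then the function T : ℝ^d → ℝ defined by T(h) = b₁ C₁(h) − b₂ [ cos²θ(h,u) · φ₂''(√a₂ ‖h‖) + sin²θ(h,u) · φ₂'(√a₂ ‖h‖)/(√a₂ ‖h‖) ] for h ≠ 0, and T(0) = b₁ C₁(0) − b₂ φ₂''(0), is a stationary covariance function on ℝ^d. -/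
open MeasureTheory
open scoped BigOperators RealInnerProductSpace

noncomputable section

open Filter Topology

lemma neg_tendsto_punctured : Tendsto (fun ε : ℝ => -ε) (𝓝[≠] 0) (𝓝[≠] 0) := by
  rw [tendsto_nhdsWithin_iff]
  constructor
  · have : Tendsto (fun ε : ℝ => -ε) (𝓝 0) (𝓝 (-0)) := (continuous_neg.tendsto 0)
    simpa using this.mono_left nhdsWithin_le_nhds
  · filter_upwards [self_mem_nhdsWithin] with ε hε
    simpa using hε

lemma symm_second_deriv {f f' : ℝ → ℝ} {c : ℝ}
    (hf : ∀ t, HasDerivAt f (f' t) t) (hf' : HasDerivAt f' c 0) :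
    Tendsto (fun ε => (2 * f 0 - f ε - f (-ε)) / ε ^ 2) (𝓝[≠] 0) (𝓝 (-c)) := by
  have hA : Tendsto (fun ε => (f' ε - f' 0) / ε) (𝓝[≠] 0) (𝓝 c) := by
    have := hasDerivAt_iff_tendsto_slope.mp hf'
    simpa [slope_fun_def, div_eq_inv_mul] using this
  have hB : Tendsto (fun ε => (f' (-ε) - f' 0) / (-ε)) (𝓝[≠] 0) (𝓝 c) :=
    hA.comp neg_tendsto_punctured
  have hdiv : Tendsto (fun ε => (-(f' ε) + f' (-ε)) / (2 * ε)) (𝓝[≠] 0) (𝓝 (-c)) := by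
    have h1 : Tendsto (fun ε => -(((f' ε - f' 0) / ε + (f' (-ε) - f' 0) / (-ε)) / 2))
        (𝓝[≠] 0) (𝓝 (-((c + c) / 2))) := ((hA.add hB).div_const 2).neg
    have h2 : -((c + c) / 2) = -c := by ring
    rw [h2] at h1
    apply h1.congr'
    filter_upwards [self_mem_nhdsWithin] with ε hε
    have hε' : ε ≠ 0 := hε
    field_simp
    ring
  have := HasDerivAt.lhopital_zero_nhdsNE
    (f := fun ε => 2 * f 0 - f ε - f (-ε)) (f' := fun ε => -(f' ε) + f' (-ε))
    (g := fun ε => ε ^ 2) (g' := fun ε => 2 * ε)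
    (by
      filter_upwards with ε
      have h1 : HasDerivAt (fun ε : ℝ => f (-ε)) (-(f' (-ε))) ε := by
        simpa [Function.comp_def] using (hf (-ε)).comp ε (hasDerivAt_neg ε)
      have := (((hf ε).const_sub (2 * f 0)).sub h1)
      exact this.congr_deriv (by ring))
    (by
      filter_upwards with ε
      simpa using (hasDerivAt_pow 2 ε))
    (by
      filter_upwards [self_mem_nhdsWithin] with ε (hε : ε ≠ 0)
      simpa using hε)
    (by
      have hcont : Continuous f := (Differentiable.continuous (fun t => (hf t).differentiableAt))
      have h3 : Tendsto (fun ε => 2 * f 0 - f ε - f (-ε)) (𝓝 0)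
          (𝓝 (2 * f 0 - f 0 - f (-0))) :=
        (tendsto_const_nhds.sub (hcont.tendsto 0)).sub
          ((hcont.tendsto _).comp (continuous_neg.tendsto 0))
      have h4 : 2 * f 0 - f 0 - f (-0) = 0 := by simp; ring
      rw [h4] at h3
      exact h3.mono_left nhdsWithin_le_nhds)
    (by
      have : Tendsto (fun ε : ℝ => ε ^ 2) (𝓝 0) (𝓝 ((0:ℝ) ^ 2)) := (continuous_pow 2).tendsto (0:ℝ)
      simpa using this.mono_left nhdsWithin_le_nhds)
    hdiv
  exact this


lemma second_diff_psd {d : ℕ} {C : EuclideanSpace ℝ (Fin d) → ℝ}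
    (hC : IsStationaryCovariance d C) (u : EuclideanSpace ℝ (Fin d)) (ε : ℝ)
    (n : ℕ) (x : Fin n → EuclideanSpace ℝ (Fin d)) (v : Fin n → ℝ) :
    0 ≤ ∑ i, ∑ j, v i * v j *
      (2 * C (x i - x j) - C (x i - x j + ε • u) - C (x i - x j - ε • u)) := by
  have key := hC (n + n) (Fin.append x (fun i => x i + ε • u)) (Fin.append v (fun i => -v i))
  simp only [Fin.sum_univ_add, Fin.append_left, Fin.append_right] at key
  have e1 : ∀ i j : Fin n, x i - (x j + ε • u) = x i - x j - ε • u := by intro i j; abel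
  have e2 : ∀ i j : Fin n, x i + ε • u - x j = x i - x j + ε • u := by intro i j; abel
  have e3 : ∀ i j : Fin n, x i + ε • u - (x j + ε • u) = x i - x j := by intro i j; abel
  simp only [e1, e2, e3] at key
  calc (0:ℝ) ≤ _ := key
    _ = _ := by
        simp only [← Finset.sum_add_distrib]
        apply Finset.sum_congr rfl
        intro i _
        apply Finset.sum_congr rfl
        intro j _
        ring



lemma Sval_aux {d : ℕ} {φ₂ φ₂' φ₂'' : ℝ → ℝ}
    (hderiv1 : ∀ t ∈ Set.Ioi (0:ℝ), HasDerivAt φ₂ (φ₂' t) t)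
    (hderiv2 : ∀ t ∈ Set.Ioi (0:ℝ), HasDerivAt φ₂' (φ₂'' t) t)
    {u : EuclideanSpace ℝ (Fin d)} (hu : ‖u‖ = 1) {a₂ : ℝ} (ha₂ : 0 < a₂)
    {p S : EuclideanSpace ℝ (Fin d) → ℝ}
    (hd1 : ∀ (h : EuclideanSpace ℝ (Fin d)) (t : ℝ),
      HasDerivAt (fun s : ℝ => φ₂ (Real.sqrt a₂ * ‖h + s • u‖)) (p (h + t • u)) t)
    (hd2 : ∀ (h : EuclideanSpace ℝ (Fin d)) (t : ℝ),
      HasDerivAt (fun s : ℝ => p (h + s • u)) (S (h + t • u)) t)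
    (h : EuclideanSpace ℝ (Fin d)) (hh : h ≠ 0) :
    S h = a₂ * (((⟪h, u⟫ : ℝ) / ‖h‖) ^ 2 * φ₂'' (Real.sqrt a₂ * ‖h‖) +
      (1 - ((⟪h, u⟫ : ℝ) / ‖h‖) ^ 2) *
        (φ₂' (Real.sqrt a₂ * ‖h‖) / (Real.sqrt a₂ * ‖h‖))) := by
  have hsq : (0:ℝ) < Real.sqrt a₂ := Real.sqrt_pos.mpr ha₂
  have hsqsq : Real.sqrt a₂ ^ 2 = a₂ := Real.sq_sqrt ha₂.le
  set c : ℝ := (⟪h, u⟫ : ℝ) with hc_def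
  set r : ℝ := ‖h‖ with hr_def
  have hr : 0 < r := norm_pos_iff.mpr hh
  -- the norm along the path
  have hnorm_sq : ∀ t : ℝ, ‖h + t • u‖ ^ 2 = r ^ 2 + 2 * c * t + t ^ 2 := by
    intro t
    rw [norm_add_sq_real, real_inner_smul_right, norm_smul, hu, mul_one, Real.norm_eq_abs]
    rw [sq_abs]
    ring
  set Q : ℝ → ℝ := fun t => r ^ 2 + 2 * c * t + t ^ 2 with hQ_def
  have hQderiv : ∀ t : ℝ, HasDerivAt Q (2 * c + 2 * t) t := by
    intro t
    have h1 : HasDerivAt (fun t : ℝ => r ^ 2 + 2 * c * t + t ^ 2)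
        (0 + 2 * c * 1 + 2 * t ^ 1) t :=
      (((hasDerivAt_const t (r ^ 2)).add ((hasDerivAt_id t).const_mul (2 * c))).add
        (hasDerivAt_pow 2 t)).congr_deriv (by push_cast; ring)
    simpa using h1
  have hnQ : ∀ t : ℝ, ‖h + t • u‖ = Real.sqrt (Q t) := by
    intro t
    rw [show Q t = ‖h + t • u‖ ^ 2 from (hnorm_sq t).symm, Real.sqrt_sq (norm_nonneg _)]
  set s : Set ℝ := {t | h + t • u ≠ 0} with hs_def
  have hsopen : IsOpen s := by
    have : s = (fun t : ℝ => h + t • u) ⁻¹' {(0 : EuclideanSpace ℝ (Fin d))}ᶜ := by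
      ext t; simp [hs_def]
    rw [this]
    exact (isOpen_compl_singleton).preimage (by continuity)
  have hs0 : (0:ℝ) ∈ s := by simp [hs_def, hh]
  have hsnhds : s ∈ 𝓝 (0:ℝ) := hsopen.mem_nhds hs0
  have hNpos : ∀ t ∈ s, (0:ℝ) < ‖h + t • u‖ := fun t ht => norm_pos_iff.mpr ht
  have hQpos : ∀ t ∈ s, (0:ℝ) < Q t := by
    intro t ht
    rw [show Q t = ‖h + t • u‖ ^ 2 from (hnorm_sq t).symm]
    exact pow_pos (hNpos t ht) 2
  have hNd : ∀ t ∈ s, HasDerivAt (fun t : ℝ => ‖h + t • u‖) ((c + t) / ‖h + t • u‖) t := by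
    intro t ht
    have h1 : HasDerivAt (fun t : ℝ => Real.sqrt (Q t))
        (1 / (2 * Real.sqrt (Q t)) * (2 * c + 2 * t)) t :=
      (Real.hasDerivAt_sqrt (hQpos t ht).ne').comp t (hQderiv t)
    have h2 : (1 / (2 * Real.sqrt (Q t)) * (2 * c + 2 * t)) = (c + t) / ‖h + t • u‖ := by
      rw [hnQ t]
      have : Real.sqrt (Q t) ≠ 0 := by rw [← hnQ t]; exact (hNpos t ht).ne'
      rw [← hnQ t] at this ⊢
      field_simp
    rw [h2] at h1
    exact h1.congr_of_eventuallyEq (by filter_upwards with t using by rw [hnQ])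
  have hfd : ∀ t ∈ s, HasDerivAt (fun t : ℝ => φ₂ (Real.sqrt a₂ * ‖h + t • u‖))
      (φ₂' (Real.sqrt a₂ * ‖h + t • u‖) * (Real.sqrt a₂ * ((c + t) / ‖h + t • u‖))) t := by
    intro t ht
    have hpos : Real.sqrt a₂ * ‖h + t • u‖ ∈ Set.Ioi (0:ℝ) := mul_pos hsq (hNpos t ht)
    have h2 : HasDerivAt (fun t : ℝ => Real.sqrt a₂ * ‖h + t • u‖)
        (Real.sqrt a₂ * ((c + t) / ‖h + t • u‖)) t := (hNd t ht).const_mul _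
    exact (hderiv1 _ hpos).comp t h2
  have hpeq : ∀ t ∈ s, p (h + t • u) =
      φ₂' (Real.sqrt a₂ * ‖h + t • u‖) * (Real.sqrt a₂ * ((c + t) / ‖h + t • u‖)) := by
    intro t ht
    exact HasDerivAt.unique (hd1 h t) (hfd t ht)
  have hN0 : ‖h + (0:ℝ) • u‖ = r := by simp; rfl
  -- derivative of the first factor at 0
  have hA : HasDerivAt (fun t : ℝ => φ₂' (Real.sqrt a₂ * ‖h + t • u‖))
      (φ₂'' (Real.sqrt a₂ * r) * (Real.sqrt a₂ * (c / r))) 0 := by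
    have h2 : HasDerivAt (fun t : ℝ => Real.sqrt a₂ * ‖h + t • u‖)
        (Real.sqrt a₂ * ((c + 0) / ‖h + (0:ℝ) • u‖)) 0 := (hNd 0 hs0).const_mul _
    have hpos : Real.sqrt a₂ * ‖h + (0:ℝ) • u‖ ∈ Set.Ioi (0:ℝ) := mul_pos hsq (hNpos 0 hs0)
    have := (hderiv2 _ hpos).comp 0 h2
    simpa [hr_def, Function.comp_def] using this
  -- derivative of the second factor at 0
  have hB : HasDerivAt (fun t : ℝ => Real.sqrt a₂ * ((c + t) / ‖h + t • u‖))
      (Real.sqrt a₂ * ((1 * r - (c + 0) * ((c + 0) / r)) / r ^ 2)) 0 := by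
    have hnum : HasDerivAt (fun t : ℝ => c + t) 1 0 := by
      simpa using (hasDerivAt_id (0:ℝ)).const_add c
    have := (hnum.div (hNd 0 hs0) (hNpos 0 hs0).ne').const_mul (Real.sqrt a₂)
    simpa [hN0] using this
  have hq : HasDerivAt
      (fun t : ℝ => φ₂' (Real.sqrt a₂ * ‖h + t • u‖) * (Real.sqrt a₂ * ((c + t) / ‖h + t • u‖)))
      (φ₂'' (Real.sqrt a₂ * r) * (Real.sqrt a₂ * (c / r)) * (Real.sqrt a₂ * ((c + 0) / ‖h + (0:ℝ) • u‖)) +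
        φ₂' (Real.sqrt a₂ * ‖h + (0:ℝ) • u‖) *
          (Real.sqrt a₂ * ((1 * r - (c + 0) * ((c + 0) / r)) / r ^ 2))) 0 := hA.mul hB
  have hps : HasDerivAt (fun t : ℝ => p (h + t • u)) _ 0 :=
    hq.congr_of_eventuallyEq (by filter_upwards [hsnhds] with t ht using hpeq t ht)
  have hSh : S h = _ := HasDerivAt.unique (by simpa using hd2 h 0) hps
  rw [hSh, hN0]
  field_simp
  linear_combination (Real.sqrt a₂ * r * φ₂'' (Real.sqrt a₂ * r) * c ^ 2 +
    φ₂' (Real.sqrt a₂ * r) * (r ^ 2 - c ^ 2)) * hsqsq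


set_option maxHeartbeats 1000000 in
theorem statement_5 (d : ℕ) (hd : 1 ≤ d) (C₁ : EuclideanSpace ℝ (Fin d) → ℝ)
    (hC₁ : IsStationaryCovariance d C₁) (φ₂ φ₂' φ₂'' : ℝ → ℝ)
    (hφ₂ : MemPhi d φ₂)
    (hsmooth : ContDiff ℝ 2 (fun h : EuclideanSpace ℝ (Fin d) => φ₂ ‖h‖))
    (hderiv1 : ∀ t ∈ Set.Ioi (0 : ℝ), HasDerivAt φ₂ (φ₂' t) t)
    (hderiv2 : ∀ t ∈ Set.Ioi (0 : ℝ), HasDerivAt φ₂' (φ₂'' t) t)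
    (hcont1 : ContinuousOn φ₂' (Set.Ici 0)) (hcont2 : ContinuousOn φ₂'' (Set.Ici 0))
    (u : EuclideanSpace ℝ (Fin d)) (hu : ‖u‖ = 1)
    (a₂ b₁ b₂ : ℝ) (ha₂ : 0 < a₂) (hb₁ : 0 ≤ b₁) (hb₂ : 0 ≤ b₂)
    (T : EuclideanSpace ℝ (Fin d) → ℝ)
    (hT0 : T 0 = b₁ * C₁ 0 - b₂ * φ₂'' 0)
    (hT : ∀ h : EuclideanSpace ℝ (Fin d), h ≠ 0 →
      T h = b₁ * C₁ h -
        b₂ * (((⟪h, u⟫ : ℝ) / ‖h‖) ^ 2 * φ₂'' (Real.sqrt a₂ * ‖h‖) +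
          (1 - ((⟪h, u⟫ : ℝ) / ‖h‖) ^ 2) *
            (φ₂' (Real.sqrt a₂ * ‖h‖) / (Real.sqrt a₂ * ‖h‖)))) :
    IsStationaryCovariance d T := by
  have hsq : Real.sqrt a₂ > 0 := Real.sqrt_pos.mpr ha₂
  have hsqsq : Real.sqrt a₂ ^ 2 = a₂ := Real.sq_sqrt ha₂.le
  set g : EuclideanSpace ℝ (Fin d) → ℝ := fun h => φ₂ (Real.sqrt a₂ * ‖h‖) with hg_def
  have hg2 : ContDiff ℝ 2 g := by
    have hcomp : g = (fun h : EuclideanSpace ℝ (Fin d) => φ₂ ‖h‖) ∘ (fun h : EuclideanSpace ℝ (Fin d) => Real.sqrt a₂ • h) := by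
      funext h
      simp [hg_def, norm_smul, abs_of_nonneg (Real.sqrt_nonneg a₂)]
    rw [hcomp]
    exact hsmooth.comp (contDiff_id.const_smul _)
  have hgcov : IsStationaryCovariance d g := by
    intro n x v
    have key := hφ₂.2 n (fun i => Real.sqrt a₂ • x i) v
    calc (0:ℝ) ≤ _ := key
      _ = _ := by
          apply Finset.sum_congr rfl; intro i _
          apply Finset.sum_congr rfl; intro j _
          have : Real.sqrt a₂ • x i - Real.sqrt a₂ • x j = Real.sqrt a₂ • (x i - x j) := by
            rw [smul_sub]
          rw [this]
          show v i * v j * φ₂ ‖Real.sqrt a₂ • (x i - x j)‖ = v i * v j * g (x i - x j)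
          rw [norm_smul, Real.norm_eq_abs, abs_of_nonneg (Real.sqrt_nonneg a₂)]
  have hgdiff : Differentiable ℝ g := hg2.differentiable (by norm_num)
  set p : EuclideanSpace ℝ (Fin d) → ℝ := fun x => fderiv ℝ g x u with hp_def
  have hp1 : ContDiff ℝ 1 p :=
    (hg2.fderiv_right (m := 1) (by norm_num)).clm_apply contDiff_const
  set S : EuclideanSpace ℝ (Fin d) → ℝ := fun x => fderiv ℝ p x u with hS_def
  have hScont : Continuous S :=
    ((hp1.fderiv_right (m := 0) (by norm_num)).clm_apply contDiff_const).continuous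
  have hpath : ∀ (h : EuclideanSpace ℝ (Fin d)) (t : ℝ), HasDerivAt (fun s : ℝ => h + s • u) u t := by
    intro h t
    have := ((hasDerivAt_id t).smul_const u).const_add h
    simpa using this
  have hd1 : ∀ (h : EuclideanSpace ℝ (Fin d)) (t : ℝ), HasDerivAt (fun s => g (h + s • u)) (p (h + t • u)) t := by
    intro h t
    exact (hgdiff (h + t • u)).hasFDerivAt.comp_hasDerivAt t (hpath h t)
  have hd2 : ∀ (h : EuclideanSpace ℝ (Fin d)) (t : ℝ), HasDerivAt (fun s => p (h + s • u)) (S (h + t • u)) t := by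
    intro h t
    exact ((hp1.differentiable (by norm_num)) (h + t • u)).hasFDerivAt.comp_hasDerivAt t (hpath h t)
  -- pointwise limit
  have key : ∀ h : EuclideanSpace ℝ (Fin d), Tendsto (fun ε => (2 * g h - g (h + ε • u) - g (h - ε • u)) / ε ^ 2)
      (𝓝[≠] 0) (𝓝 (- S h)) := by
    intro h
    have h0 : HasDerivAt (fun s : ℝ => p (h + s • u)) (S h) (0:ℝ) := by simpa using hd2 h 0
    have := symm_second_deriv (f := fun t => g (h + t • u)) (f' := fun t => p (h + t • u))
      (hd1 h) h0
    simp only [zero_smul, add_zero, neg_smul, ← sub_eq_add_neg] at this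
    exact this
  -- psd of -S
  have hSpsd : IsStationaryCovariance d (fun h => - S h) := by
    intro n x v
    have hlim : Tendsto (fun ε : ℝ => ∑ i, ∑ j, v i * v j *
        ((2 * g (x i - x j) - g (x i - x j + ε • u) - g (x i - x j - ε • u)) / ε ^ 2))
        (𝓝[≠] 0) (𝓝 (∑ i, ∑ j, v i * v j * (- S (x i - x j)))) := by
      apply tendsto_finset_sum
      intro i _
      apply tendsto_finset_sum
      intro j _
      exact (key (x i - x j)).const_mul _
    refine ge_of_tendsto hlim ?_
    filter_upwards [self_mem_nhdsWithin] with ε (hε : ε ≠ 0)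
    have heq : ∑ i, ∑ j, v i * v j *
        ((2 * g (x i - x j) - g (x i - x j + ε • u) - g (x i - x j - ε • u)) / ε ^ 2)
        = (∑ i, ∑ j, v i * v j *
          (2 * g (x i - x j) - g (x i - x j + ε • u) - g (x i - x j - ε • u))) / ε ^ 2 := by
      simp [Finset.sum_div, mul_div_assoc]
    rw [heq]
    exact div_nonneg (second_diff_psd hgcov u ε n x v) (sq_nonneg ε)
  -- explicit value of S for h ≠ 0
  have hSval : ∀ h : EuclideanSpace ℝ (Fin d), h ≠ 0 → S h =
      a₂ * (((⟪h, u⟫ : ℝ) / ‖h‖) ^ 2 * φ₂'' (Real.sqrt a₂ * ‖h‖) +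
        (1 - ((⟪h, u⟫ : ℝ) / ‖h‖) ^ 2) *
          (φ₂' (Real.sqrt a₂ * ‖h‖) / (Real.sqrt a₂ * ‖h‖))) := by
    intro h hh
    exact Sval_aux hderiv1 hderiv2 hu ha₂ (fun h t => hd1 h t) hd2 h hh
  -- value at 0
  have hS0 : S 0 = a₂ * φ₂'' 0 := by
    have hu0 : u ≠ 0 := by
      intro h0; rw [h0] at hu; simp at hu
    have hval : ∀ t : ℝ, 0 < t → S (t • u) = a₂ * φ₂'' (Real.sqrt a₂ * t) := by
      intro t ht
      have hne : t • u ≠ 0 := smul_ne_zero ht.ne' hu0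
      rw [hSval _ hne]
      have h1 : ‖t • u‖ = t := by
        rw [norm_smul, hu, mul_one, Real.norm_eq_abs, abs_of_pos ht]
      have h2 : (⟪t • u, u⟫ : ℝ) = t := by
        rw [real_inner_smul_left, real_inner_self_eq_norm_mul_norm, hu]
        ring
      rw [h1, h2]
      field_simp; ring
    have lim1 : Tendsto (fun t : ℝ => S (t • u)) (𝓝[>] 0) (𝓝 (S 0)) := by
      have hcontc : Continuous (fun t : ℝ => S (t • u)) := hScont.comp (continuous_id.smul continuous_const)
      have h3 := hcontc.tendsto 0
      simp only [zero_smul] at h3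
      exact h3.mono_left nhdsWithin_le_nhds
    have lim2 : Tendsto (fun t : ℝ => a₂ * φ₂'' (Real.sqrt a₂ * t)) (𝓝[>] 0)
        (𝓝 (a₂ * φ₂'' 0)) := by
      have hmap : Tendsto (fun t : ℝ => Real.sqrt a₂ * t) (𝓝[>] (0:ℝ))
          (𝓝[Set.Ici 0] 0) := by
        rw [tendsto_nhdsWithin_iff]
        constructor
        · have h4 : Tendsto (fun t : ℝ => Real.sqrt a₂ * t) (𝓝 0) (𝓝 (Real.sqrt a₂ * 0)) :=
            (continuous_const.mul continuous_id).tendsto 0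
          simpa using h4.mono_left nhdsWithin_le_nhds
        · filter_upwards [self_mem_nhdsWithin] with t (ht : 0 < t)
          exact Set.mem_Ici.mpr (mul_nonneg (Real.sqrt_nonneg _) ht.le)
      have h5 : Tendsto φ₂'' (𝓝[Set.Ici 0] 0) (𝓝 (φ₂'' 0)) := hcont2 0 (by simp)
      exact (h5.comp hmap).const_mul a₂
    refine tendsto_nhds_unique_of_eventuallyEq lim1 lim2 ?_
    filter_upwards [self_mem_nhdsWithin] with t (ht : 0 < t) using hval t ht
  -- rewrite T
  have hTeq : ∀ h : EuclideanSpace ℝ (Fin d), T h = b₁ * C₁ h + (b₂ / a₂) * (- S h) := by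
    intro h
    by_cases hh : h = 0
    · rw [hh, hT0, hS0]; field_simp; ring
    · rw [hT h hh, hSval h hh]; field_simp; ring
  intro n x v
  calc (0:ℝ) ≤ b₁ * (∑ i, ∑ j, v i * v j * C₁ (x i - x j)) +
        (b₂ / a₂) * (∑ i, ∑ j, v i * v j * (- S (x i - x j))) :=
        add_nonneg (mul_nonneg hb₁ (hC₁ n x v))
          (mul_nonneg (div_nonneg hb₂ ha₂.le) (hSpsd n x v))
    _ = ∑ i, ∑ j, v i * v j * T (x i - x j) := by
        simp only [Finset.mul_sum, ← Finset.sum_add_distrib]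
        apply Finset.sum_congr rfl; intro i _
        apply Finset.sum_congr rfl; intro j _
        rw [hTeq (x i - x j)]; ring
end
end

section
/- Let d ≥ 1, let φ ∈ Φ_d be such that the map h ↦ φ(‖h‖) is twice continuously differentiable on ℝ^d, and let u be a unit vector in ℝ^d. Then the function D : ℝ^d → ℝ defined by D(h) = − cos²θ(h,u) · φ''(‖h‖) − sin²θ(h,u) · φ'(‖h‖)/‖h‖ for h ≠ 0, and D(0) = −φ''(0), is a stationary covariance function on ℝ^d (it is the covariance function of the directional derivative in direction u of a random field with isotropic covariance φ). -/
open MeasureTheory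
open scoped BigOperators RealInnerProductSpace

noncomputable section

open Filter Topology in
private lemma symmSlope {ψ : ℝ → ℝ} {G : ℝ} (h : HasDerivAt ψ G 0) :
    Filter.Tendsto (fun ε => (ψ (-ε) - ψ ε) / (2*ε)) (𝓝[≠] (0:ℝ)) (𝓝 (-G)) := by
  have hs : Tendsto (slope ψ 0) (𝓝[≠] (0:ℝ)) (𝓝 G) := hasDerivAt_iff_tendsto_slope.mp h
  have hneg : Tendsto (fun ε : ℝ => -ε) (𝓝[≠] (0:ℝ)) (𝓝[≠] (0:ℝ)) := by
    apply tendsto_nhdsWithin_of_tendsto_nhds_of_eventually_within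
    · simpa using (continuous_neg.tendsto (0:ℝ)).mono_left nhdsWithin_le_nhds
    · filter_upwards [self_mem_nhdsWithin] with ε hε
      simpa using hε
  have hs2 : Tendsto (fun ε => slope ψ 0 (-ε)) (𝓝[≠] (0:ℝ)) (𝓝 G) := hs.comp hneg
  have hmain : Tendsto (fun ε => -(slope ψ 0 ε + slope ψ 0 (-ε))/2) (𝓝[≠] (0:ℝ))
      (𝓝 (-(G+G)/2)) := ((hs.add hs2).neg).div_const 2
  have : -(G+G)/2 = -G := by ring
  rw [this] at hmain
  refine hmain.congr' ?_
  filter_upwards [self_mem_nhdsWithin] with ε hε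
  have hε' : (ε : ℝ) ≠ 0 := hε
  simp only [slope_def_field, sub_zero]
  rw [div_neg, ← sub_eq_add_neg, div_sub_div_same, sub_sub_sub_cancel_right,
    ← neg_div, neg_sub, div_div, mul_comm]

open Filter Topology in
private lemma secondDiff {g : ℝ → ℝ} (hg : ContDiff ℝ 2 g) :
    Tendsto (fun ε => (2 * g 0 - g ε - g (-ε)) / ε^2) (𝓝[≠] (0:ℝ))
      (𝓝 (-(deriv (deriv g) 0))) := by
  have h2 : (2 : WithTop ℕ∞) = 1 + 1 := by norm_num
  rw [h2] at hg
  obtain ⟨hdiff, -, hg1⟩ := contDiff_succ_iff_deriv.mp hg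
  obtain ⟨hdiff2, hcont2⟩ := contDiff_one_iff_deriv.mp hg1
  apply HasDerivAt.lhopital_zero_nhdsNE
    (f' := fun ε => deriv g (-ε) - deriv g ε) (g' := fun ε => 2*ε)
  · filter_upwards with x
    have ha : HasDerivAt (fun ε : ℝ => g (-ε)) (deriv g (-x) * (-1)) x :=
      ((hdiff (-x)).hasDerivAt).comp x (hasDerivAt_neg x)
    have hb := ((hasDerivAt_const x (2 * g 0)).sub (hdiff x).hasDerivAt).sub ha
    exact hb.congr_deriv (by ring)
  · filter_upwards with x
    have := hasDerivAt_pow 2 x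
    exact this.congr_deriv (by norm_num)
  · filter_upwards [self_mem_nhdsWithin] with x hx
    have hx' : (x:ℝ) ≠ 0 := hx
    simp [hx']
  · have hc : Continuous fun ε : ℝ => 2 * g 0 - g ε - g (-ε) :=
      (continuous_const.sub hg.continuous).sub (hg.continuous.comp continuous_neg)
    have : Tendsto (fun ε : ℝ => 2 * g 0 - g ε - g (-ε)) (𝓝 0)
        (𝓝 (2 * g 0 - g 0 - g (-0))) := hc.tendsto 0
    rw [neg_zero, show 2 * g 0 - g 0 - g 0 = 0 by ring] at this
    exact this.mono_left nhdsWithin_le_nhds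
  · have : Tendsto (fun ε : ℝ => ε^2) (𝓝 0) (𝓝 0) := by
      simpa using (continuous_pow 2).tendsto (0:ℝ)
    exact this.mono_left nhdsWithin_le_nhds
  · exact symmSlope (hdiff2 0).hasDerivAt
open Filter Topology in
open scoped RealInnerProductSpace in
private lemma derivderiv_ne {d : ℕ} (φ φ' φ'' : ℝ → ℝ)
    (hderiv1 : ∀ t ∈ Set.Ioi (0:ℝ), HasDerivAt φ (φ' t) t)
    (hderiv2 : ∀ t ∈ Set.Ioi (0:ℝ), HasDerivAt φ' (φ'' t) t)
    (u h : EuclideanSpace ℝ (Fin d)) (hu : ‖u‖ = 1) (hh : h ≠ 0) :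
    deriv (deriv (fun t : ℝ => φ ‖h + t • u‖)) 0 =
      ((⟪h, u⟫ : ℝ) / ‖h‖)^2 * φ'' ‖h‖ +
        (1 - ((⟪h, u⟫ : ℝ) / ‖h‖)^2) * (φ' ‖h‖ / ‖h‖) := by
  set a : ℝ := ⟪h, u⟫ with ha
  have hr0 : 0 < ‖h‖ := norm_pos_iff.mpr hh
  have q_eq : ∀ s : ℝ, ‖h‖^2 + 2*(s*a) + s^2 = ‖h + s • u‖^2 := by
    intro s
    rw [norm_add_sq_real, real_inner_smul_right, norm_smul, hu, mul_one,
      Real.norm_eq_abs, sq_abs, ← ha]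
  have norm_eq : ∀ s : ℝ, ‖h + s • u‖ = Real.sqrt (‖h‖^2 + 2*(s*a) + s^2) := by
    intro s
    rw [q_eq s, Real.sqrt_sq (norm_nonneg _)]
  have hpos : ∀ t : ℝ, |t| < ‖h‖ → 0 < ‖h + t • u‖ := by
    intro t ht
    have h1 : ‖h‖ - ‖-(t • u)‖ ≤ ‖h + t • u‖ := by
      simpa [sub_neg_eq_add] using norm_sub_norm_le h (-(t • u))
    have h2 : ‖-(t • u)‖ = |t| := by simp [norm_smul, hu]
    rw [h2] at h1
    linarith
  have stepA : ∀ t : ℝ, |t| < ‖h‖ →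
      HasDerivAt (fun s : ℝ => ‖h + s • u‖) ((a + t) / ‖h + t • u‖) t := by
    intro t ht
    have hq : HasDerivAt (fun s : ℝ => ‖h‖^2 + 2*(s*a) + s^2) (2*a + 2*t) t := by
      have h1 := (((hasDerivAt_id t).mul_const a).const_mul 2).const_add (‖h‖^2)
      have h2 := h1.add (hasDerivAt_pow 2 t)
      exact h2.congr_deriv (by norm_num)
    have hqpos : 0 < ‖h‖^2 + 2*(t*a) + t^2 := by
      rw [q_eq t]; exact pow_pos (hpos t ht) 2
    have key := (Real.hasDerivAt_sqrt (ne_of_gt hqpos)).comp t hq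
    have key2 : HasDerivAt (fun s : ℝ => ‖h + s • u‖)
        (1/(2*Real.sqrt (‖h‖^2 + 2*(t*a) + t^2)) * (2*a + 2*t)) t :=
      key.congr_of_eventuallyEq (Filter.Eventually.of_forall fun s => norm_eq s)
    convert key2 using 1
    rw [norm_eq t]
    have hs : Real.sqrt (‖h‖^2 + 2*(t*a) + t^2) ≠ 0 := by
      rw [← norm_eq t]; exact ne_of_gt (hpos t ht)
    field_simp
  -- ψ : explicit derivative
  set ψ : ℝ → ℝ := fun t => φ' ‖h + t • u‖ * ((a + t) / ‖h + t • u‖) with hψ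
  have stepB : ∀ t : ℝ, |t| < ‖h‖ → HasDerivAt (fun s : ℝ => φ ‖h + s • u‖) (ψ t) t := by
    intro t ht
    exact (hderiv1 _ (hpos t ht)).comp t (stepA t ht)
  -- derivative of ψ at 0
  have h0u : ‖h + (0:ℝ) • u‖ = ‖h‖ := by simp
  have stepA0 : HasDerivAt (fun s : ℝ => ‖h + s • u‖) (a / ‖h‖) 0 := by
    have := stepA 0 (by simpa using hr0)
    simpa [h0u] using this
  have part1 : HasDerivAt (fun t : ℝ => φ' ‖h + t • u‖) (φ'' ‖h‖ * (a / ‖h‖)) 0 := by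
    have hout : HasDerivAt φ' (φ'' ‖h‖) (‖h + (0:ℝ) • u‖) := by
      rw [h0u]; exact hderiv2 ‖h‖ hr0
    exact hout.comp 0 stepA0
  have part2 : HasDerivAt (fun t : ℝ => (a + t) / ‖h + t • u‖)
      ((1 * ‖h‖ - (a + 0) * (a / ‖h‖)) / ‖h‖^2) 0 := by
    have hnum : HasDerivAt (fun t : ℝ => a + t) 1 0 := (hasDerivAt_id 0).const_add a
    have := hnum.div stepA0 (by rw [h0u]; exact ne_of_gt hr0)
    rw [h0u] at this
    exact this
  have hψ0 : HasDerivAt ψ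
      (φ'' ‖h‖ * (a / ‖h‖) * ((a + 0) / ‖h + (0:ℝ) • u‖) +
        φ' ‖h + (0:ℝ) • u‖ * ((1 * ‖h‖ - (a + 0) * (a / ‖h‖)) / ‖h‖^2)) 0 :=
    part1.mul part2
  have heq : deriv (fun t : ℝ => φ ‖h + t • u‖) =ᶠ[𝓝 (0:ℝ)] ψ := by
    have hball : ∀ᶠ t in 𝓝 (0:ℝ), |t| < ‖h‖ := by
      have : Tendsto (fun t : ℝ => |t|) (𝓝 0) (𝓝 |0|) := (continuous_abs.tendsto 0)
      rw [abs_zero] at this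
      exact this.eventually_lt_const hr0
    filter_upwards [hball] with t ht
    exact (stepB t ht).deriv
  rw [heq.deriv_eq, hψ0.deriv]
  simp only [add_zero, h0u, one_mul]
  field_simp

open Filter Topology in
open scoped RealInnerProductSpace in
private lemma derivderiv_zero {d : ℕ} (φ φ' φ'' : ℝ → ℝ)
    (hderiv1 : ∀ t ∈ Set.Ioi (0:ℝ), HasDerivAt φ (φ' t) t)
    (hderiv2 : ∀ t ∈ Set.Ioi (0:ℝ), HasDerivAt φ' (φ'' t) t)
    (hcont2 : ContinuousOn φ'' (Set.Ici 0))
    (u : EuclideanSpace ℝ (Fin d)) (hu : ‖u‖ = 1)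
    (hg : ContDiff ℝ 2 (fun t : ℝ => φ ‖(0 : EuclideanSpace ℝ (Fin d)) + t • u‖)) :
    deriv (deriv (fun t : ℝ => φ ‖(0 : EuclideanSpace ℝ (Fin d)) + t • u‖)) 0 = φ'' 0 := by
  set g : ℝ → ℝ := fun t => φ ‖(0 : EuclideanSpace ℝ (Fin d)) + t • u‖ with hgdef
  have hgt : ∀ t : ℝ, 0 < t → g t = φ t := by
    intro t ht
    simp [hgdef, norm_smul, hu, abs_of_pos ht]
  have hd1 : ∀ t ∈ Set.Ioi (0:ℝ), deriv g t = φ' t := by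
    intro t ht
    have heq : g =ᶠ[𝓝 t] φ := by
      filter_upwards [lt_mem_nhds ht] with s hs
      exact hgt s hs
    rw [heq.deriv_eq, (hderiv1 t ht).deriv]
  have hd2 : ∀ t ∈ Set.Ioi (0:ℝ), deriv (deriv g) t = φ'' t := by
    intro t ht
    have heq : deriv g =ᶠ[𝓝 t] φ' := by
      filter_upwards [lt_mem_nhds ht] with s hs
      exact hd1 s hs
    rw [heq.deriv_eq, (hderiv2 t ht).deriv]
  have h2 : (2 : WithTop ℕ∞) = 1 + 1 := by norm_num
  rw [h2] at hg
  obtain ⟨-, -, hg1⟩ := contDiff_succ_iff_deriv.mp hg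
  obtain ⟨-, hcont⟩ := contDiff_one_iff_deriv.mp hg1
  have l1 : Tendsto (deriv (deriv g)) (𝓝[>] (0:ℝ)) (𝓝 (deriv (deriv g) 0)) :=
    (hcont.tendsto 0).mono_left nhdsWithin_le_nhds
  have l2 : Tendsto (deriv (deriv g)) (𝓝[>] (0:ℝ)) (𝓝 (φ'' 0)) := by
    have hphi : Tendsto φ'' (𝓝[>] (0:ℝ)) (𝓝 (φ'' 0)) :=
      (hcont2 0 Set.self_mem_Ici).mono_left (nhdsWithin_mono 0 Set.Ioi_subset_Ici_self)
    refine hphi.congr' ?_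
    filter_upwards [self_mem_nhdsWithin] with t ht
    exact (hd2 t ht).symm
  exact tendsto_nhds_unique l1 l2

theorem statement_10 (d : ℕ) (hd : 1 ≤ d) (φ φ' φ'' : ℝ → ℝ)
    (hφ : MemPhi d φ)
    (hsmooth : ContDiff ℝ 2 (fun h : EuclideanSpace ℝ (Fin d) => φ ‖h‖))
    (hderiv1 : ∀ t ∈ Set.Ioi (0 : ℝ), HasDerivAt φ (φ' t) t)
    (hderiv2 : ∀ t ∈ Set.Ioi (0 : ℝ), HasDerivAt φ' (φ'' t) t)
    (hcont1 : ContinuousOn φ' (Set.Ici 0)) (hcont2 : ContinuousOn φ'' (Set.Ici 0))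
    (u : EuclideanSpace ℝ (Fin d)) (hu : ‖u‖ = 1)
    (D : EuclideanSpace ℝ (Fin d) → ℝ)
    (hD0 : D 0 = -φ'' 0)
    (hD : ∀ h : EuclideanSpace ℝ (Fin d), h ≠ 0 →
      D h = -(((⟪h, u⟫ : ℝ) / ‖h‖) ^ 2) * φ'' ‖h‖ -
        (1 - ((⟪h, u⟫ : ℝ) / ‖h‖) ^ 2) * (φ' ‖h‖ / ‖h‖)) :
    IsStationaryCovariance d D := by
  intro n x v
  have hgsm : ∀ w : EuclideanSpace ℝ (Fin d), ContDiff ℝ 2 (fun t : ℝ => φ ‖w + t • u‖) := by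
    intro w
    have hl : ContDiff ℝ 2 (fun t : ℝ => w + t • u) :=
      contDiff_const.add (contDiff_id.smul contDiff_const)
    exact hsmooth.comp hl
  have hDval : ∀ w : EuclideanSpace ℝ (Fin d),
      deriv (deriv (fun t : ℝ => φ ‖w + t • u‖)) 0 = -D w := by
    intro w
    by_cases hw : w = 0
    · subst hw
      rw [derivderiv_zero φ φ' φ'' hderiv1 hderiv2 hcont2 u hu (hgsm 0), hD0, neg_neg]
    · rw [derivderiv_ne φ φ' φ'' hderiv1 hderiv2 u w hu hw, hD w hw]
      ring
  have key : ∀ w : EuclideanSpace ℝ (Fin d),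
      Filter.Tendsto (fun ε : ℝ => (2 * φ ‖w‖ - φ ‖w + ε • u‖ - φ ‖w - ε • u‖)/ε^2)
        (nhdsWithin 0 {(0:ℝ)}ᶜ) (nhds (D w)) := by
    intro w
    have h2d := secondDiff (hgsm w)
    rw [hDval w, neg_neg] at h2d
    refine h2d.congr fun ε => ?_
    have e1 : ‖w + (0:ℝ) • u‖ = ‖w‖ := by simp
    have e2 : ‖w + (-ε) • u‖ = ‖w - ε • u‖ := by rw [neg_smul, ← sub_eq_add_neg]
    rw [e1, e2]
  have hsum : Filter.Tendsto (fun ε : ℝ => ∑ i, ∑ j, v i * v j *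
      ((2 * φ ‖x i - x j‖ - φ ‖x i - x j + ε • u‖ - φ ‖x i - x j - ε • u‖)/ε^2))
      (nhdsWithin 0 {(0:ℝ)}ᶜ) (nhds (∑ i, ∑ j, v i * v j * D (x i - x j))) := by
    refine tendsto_finset_sum _ fun i _ => tendsto_finset_sum _ fun j _ => ?_
    exact (key (x i - x j)).const_mul _
  refine ge_of_tendsto hsum ?_
  filter_upwards [self_mem_nhdsWithin] with ε hε
  have hε' : (ε:ℝ) ≠ 0 := hε
  have hPSD : 0 ≤ ∑ i, ∑ j, v i * v j *
      (2 * φ ‖x i - x j‖ - φ ‖x i - x j + ε • u‖ - φ ‖x i - x j - ε • u‖) := by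
    have S := hφ.2 (n + n) (Fin.append x fun i => x i + ε • u) (Fin.append v fun i => -v i)
    simp only [Fin.sum_univ_add, Fin.append_left, Fin.append_right] at S
    refine le_trans S (le_of_eq ?_)
    rw [← Finset.sum_add_distrib]
    refine Finset.sum_congr rfl fun i _ => ?_
    rw [← Finset.sum_add_distrib, ← Finset.sum_add_distrib, ← Finset.sum_add_distrib]
    refine Finset.sum_congr rfl fun j _ => ?_
    have e1 : x i - (x j + ε • u) = x i - x j - ε • u := by abel
    have e2 : x i + ε • u - x j = x i - x j + ε • u := by abel
    have e3 : x i + ε • u - (x j + ε • u) = x i - x j := by abel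
    rw [e1, e2, e3]
    ring
  calc (0:ℝ) ≤ (∑ i, ∑ j, v i * v j *
        (2 * φ ‖x i - x j‖ - φ ‖x i - x j + ε • u‖ - φ ‖x i - x j - ε • u‖)) / ε^2 :=
      div_nonneg hPSD (sq_nonneg ε)
    _ = _ := by
      simp only [Finset.sum_div, mul_div_assoc]
end
end

section
/- Let d ≥ 1 and δ > (d−1)/4. Let a₁ ≥ a₂ > 0 and b₁, b₂ ≥ 0 be constants satisfying b₁ ≥ b₂ (a₁/a₂)^{d/2}, and let η ∈ ℝ^d. Then the function h ↦ b₁ (1 + a₁‖h‖²)^{−δ} − (b₂/2) [ (1 + a₂‖h − η‖²)^{−δ} + (1 + a₂‖h + η‖²)^{−δ} ] is a stationary covariance function on ℝ^d. -/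
open MeasureTheory
open scoped BigOperators RealInnerProductSpace

noncomputable section

open Real

lemma gauss_cos_integral {d : ℕ} {c : ℝ} (hc : 0 < c) (h : EuclideanSpace ℝ (Fin d)) :
    ∫ v : EuclideanSpace ℝ (Fin d), Real.cos ⟪h, v⟫ * Real.exp (-(‖v‖ ^ 2 / (4 * c)))
      = (4 * π * c) ^ ((d : ℝ) / 2) * Real.exp (-(c * ‖h‖ ^ 2)) := by
  have hb : (0:ℝ) < 1 / (4 * c) := by positivity
  have hbre : (0:ℝ) < (((1 / (4 * c) : ℝ)) : ℂ).re := by simpa using hb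
  have key := GaussianFourier.integral_cexp_neg_mul_sq_norm_add (V := EuclideanSpace ℝ (Fin d))
      (b := ((1 / (4 * c) : ℝ) : ℂ)) hbre Complex.I h
  have hint := GaussianFourier.integrable_cexp_neg_mul_sq_norm_add (V := EuclideanSpace ℝ (Fin d))
      (b := ((1 / (4 * c) : ℝ) : ℂ)) hbre Complex.I h
  have hrhs : ((↑π / ↑(1 / (4 * c) : ℝ) : ℂ)) ^ ((Module.finrank ℝ (EuclideanSpace ℝ (Fin d)) : ℂ) / 2) *
      Complex.exp (Complex.I ^ 2 * (‖h‖:ℂ) ^ 2 / (4 * ↑(1 / (4 * c) : ℝ)))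
      = (((4 * π * c) ^ ((d : ℝ) / 2) * Real.exp (-(c * ‖h‖ ^ 2)) : ℝ) : ℂ) := by
    have h1 : ((↑π / ↑(1 / (4 * c) : ℝ)) : ℂ) = ((4 * π * c : ℝ) : ℂ) := by
      push_cast; field_simp
    have h2 : (Complex.I ^ 2 * (‖h‖:ℂ) ^ 2 / (4 * ↑(1 / (4 * c) : ℝ))) = ((-(c * ‖h‖ ^ 2) : ℝ) : ℂ) := by
      rw [Complex.I_sq]; push_cast; field_simp
    have h4 : ((4 * π * c : ℝ):ℂ) ^ ((Module.finrank ℝ (EuclideanSpace ℝ (Fin d)) : ℂ)/2)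
        = ((((4 * π * c) ^ ((d:ℝ)/2) : ℝ)):ℂ) := by
      rw [Complex.ofReal_cpow (by positivity)]
      norm_num [finrank_euclideanSpace_fin]
    rw [h1, h2, h4, ← Complex.ofReal_exp, ← Complex.ofReal_mul]
  rw [hrhs] at key
  have hre := congrArg Complex.re key
  rw [Complex.ofReal_re] at hre
  rw [← hre, ← RCLike.re_to_complex, ← integral_re hint]
  congr 1
  ext v
  rw [RCLike.re_to_complex, Complex.exp_re]
  have hre2 : ((-(((1 / (4 * c) : ℝ)):ℂ)) * (‖v‖:ℂ) ^ 2 + Complex.I * ((inner ℝ h v : ℝ):ℂ)).re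
      = -(‖v‖^2/(4*c)) := by simp [← Complex.ofReal_pow]; ring
  have him2 : ((-(((1 / (4 * c) : ℝ)):ℂ)) * (‖v‖:ℂ) ^ 2 + Complex.I * ((inner ℝ h v : ℝ):ℂ)).im
      = (inner ℝ h v : ℝ) := by simp [← Complex.ofReal_pow]
  rw [hre2, him2]
  ring

lemma gauss_integrable {d : ℕ} {c : ℝ} (hc : 0 < c) :
    Integrable (fun v : EuclideanSpace ℝ (Fin d) => rexp (-(‖v‖ ^ 2 / (4 * c)))) := by
  have hbre : (0:ℝ) < (((1 / (4 * c) : ℝ)) : ℂ).re := by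
    simpa using (by positivity : (0:ℝ) < 1 / (4 * c))
  have h := (GaussianFourier.integrable_cexp_neg_mul_sq_norm_add
      (V := EuclideanSpace ℝ (Fin d)) (b := ((1 / (4 * c) : ℝ) : ℂ)) hbre 0 0).norm
  apply h.congr
  filter_upwards with v
  rw [Complex.norm_exp]
  congr 1
  simp [← Complex.ofReal_pow]
  ring

lemma cos_gauss_integrable {d : ℕ} {c : ℝ} (hc : 0 < c) (h : EuclideanSpace ℝ (Fin d)) :
    Integrable (fun v : EuclideanSpace ℝ (Fin d) =>
      Real.cos ⟪h, v⟫ * rexp (-(‖v‖ ^ 2 / (4 * c)))) := by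
  apply (gauss_integrable hc).bdd_mul (c := 1)
  · exact (Real.continuous_cos.comp (continuous_const.inner continuous_id)).aestronglyMeasurable
  · exact Filter.Eventually.of_forall fun v => by simpa using Real.abs_cos_le_one _

lemma gauss_quad_nonneg {d : ℕ} {c₁ c₂ b₁ b₂ : ℝ} (hc₂ : 0 < c₂) (hc : c₂ ≤ c₁)
    (hb₂ : 0 ≤ b₂) (hcond : b₂ * (c₁ / c₂) ^ ((d : ℝ) / 2) ≤ b₁)
    (η : EuclideanSpace ℝ (Fin d)) (n : ℕ) (x : Fin n → EuclideanSpace ℝ (Fin d))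
    (v : Fin n → ℝ) :
    0 ≤ ∑ i, ∑ j, v i * v j *
      (b₁ * rexp (-(c₁ * ‖x i - x j‖ ^ 2)) -
        b₂ / 2 * (rexp (-(c₂ * ‖x i - x j - η‖ ^ 2)) + rexp (-(c₂ * ‖x i - x j + η‖ ^ 2)))) := by
  have hc₁ : 0 < c₁ := lt_of_lt_of_le hc₂ hc
  set A₁ : ℝ := (4 * π * c₁) ^ ((d : ℝ) / 2) with hA₁def
  set A₂ : ℝ := (4 * π * c₂) ^ ((d : ℝ) / 2) with hA₂def
  have hA₁ : 0 < A₁ := Real.rpow_pos_of_pos (by positivity) _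
  have hA₂ : 0 < A₂ := Real.rpow_pos_of_pos (by positivity) _
  -- the spectral representation of each exponential
  have repr : ∀ (c : ℝ), 0 < c → ∀ h : EuclideanSpace ℝ (Fin d),
      rexp (-(c * ‖h‖ ^ 2)) = ((4 * π * c) ^ ((d : ℝ) / 2))⁻¹ *
        ∫ w : EuclideanSpace ℝ (Fin d), Real.cos ⟪h, w⟫ * rexp (-(‖w‖ ^ 2 / (4 * c))) := by
    intro c hcpos h
    rw [gauss_cos_integral hcpos h, ← mul_assoc, inv_mul_cancel₀
      (ne_of_gt (Real.rpow_pos_of_pos (by positivity) _)), one_mul]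
  -- each (i,j) term as an integral
  set F : Fin n → Fin n → EuclideanSpace ℝ (Fin d) → ℝ := fun i j w =>
    v i * v j * (b₁ * A₁⁻¹ * (Real.cos ⟪x i - x j, w⟫ * rexp (-(‖w‖ ^ 2 / (4 * c₁)))) -
      b₂ / 2 * A₂⁻¹ * ((Real.cos ⟪x i - x j - η, w⟫ * rexp (-(‖w‖ ^ 2 / (4 * c₂)))) +
        (Real.cos ⟪x i - x j + η, w⟫ * rexp (-(‖w‖ ^ 2 / (4 * c₂)))))) with hF
  have hFint : ∀ i j, Integrable (F i j) := by
    intro i j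
    apply Integrable.const_mul
    exact (((cos_gauss_integrable hc₁ _).const_mul _).sub
      ((((cos_gauss_integrable hc₂ _).add (cos_gauss_integrable hc₂ _))).const_mul _))
  have hterm : ∀ i j, v i * v j *
      (b₁ * rexp (-(c₁ * ‖x i - x j‖ ^ 2)) -
        b₂ / 2 * (rexp (-(c₂ * ‖x i - x j - η‖ ^ 2)) + rexp (-(c₂ * ‖x i - x j + η‖ ^ 2))))
      = ∫ w, F i j w := by
    intro i j
    rw [repr c₁ hc₁ (x i - x j), repr c₂ hc₂ (x i - x j - η), repr c₂ hc₂ (x i - x j + η)]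
    have hX : Integrable (fun w : EuclideanSpace ℝ (Fin d) =>
        b₁ * A₁⁻¹ * (Real.cos ⟪x i - x j, w⟫ * rexp (-(‖w‖ ^ 2 / (4 * c₁))))) :=
      (cos_gauss_integrable hc₁ _).const_mul _
    have hYZ : Integrable (fun w : EuclideanSpace ℝ (Fin d) =>
        b₂ / 2 * A₂⁻¹ * (Real.cos ⟪x i - x j - η, w⟫ * rexp (-(‖w‖ ^ 2 / (4 * c₂))) +
          Real.cos ⟪x i - x j + η, w⟫ * rexp (-(‖w‖ ^ 2 / (4 * c₂))))) :=
      ((cos_gauss_integrable hc₂ _).add (cos_gauss_integrable hc₂ _)).const_mul _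
    have hY : Integrable (fun w : EuclideanSpace ℝ (Fin d) =>
        Real.cos ⟪x i - x j - η, w⟫ * rexp (-(‖w‖ ^ 2 / (4 * c₂)))) :=
      cos_gauss_integrable hc₂ _
    have hZ : Integrable (fun w : EuclideanSpace ℝ (Fin d) =>
        Real.cos ⟪x i - x j + η, w⟫ * rexp (-(‖w‖ ^ 2 / (4 * c₂)))) :=
      cos_gauss_integrable hc₂ _
    rw [hF]
    simp only
    rw [integral_const_mul, integral_sub hX hYZ, integral_const_mul, integral_const_mul,
      integral_add hY hZ]
    ring
  calc (0:ℝ) ≤ ∫ w, ∑ i, ∑ j, F i j w := by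
        apply integral_nonneg
        intro w
        show (0:ℝ) ≤ ∑ i : Fin n, ∑ j : Fin n, F i j w
        -- pointwise positivity
        have key : ∑ i, ∑ j, F i j w =
            (b₁ * A₁⁻¹ * rexp (-(‖w‖ ^ 2 / (4 * c₁))) -
              b₂ * A₂⁻¹ * rexp (-(‖w‖ ^ 2 / (4 * c₂))) * Real.cos ⟪η, w⟫) *
            ((∑ i, v i * Real.cos ⟪x i, w⟫) ^ 2 + (∑ i, v i * Real.sin ⟪x i, w⟫) ^ 2) := by
          have expand : ∀ (f : Fin n → ℝ), (∑ i, f i) ^ 2 = ∑ i, ∑ j, f i * f j := by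
            intro f
            rw [pow_two, Finset.sum_mul_sum Finset.univ Finset.univ]
          rw [expand, expand, mul_add, Finset.mul_sum, Finset.mul_sum,
            ← Finset.sum_add_distrib]
          apply Finset.sum_congr rfl
          intro i _
          rw [Finset.mul_sum, Finset.mul_sum, ← Finset.sum_add_distrib]
          apply Finset.sum_congr rfl
          intro j _
          rw [hF]
          simp only [inner_sub_left, inner_add_left]
          rw [Real.cos_sub (⟪x i, w⟫ - ⟪x j, w⟫) ⟪η, w⟫,
            Real.cos_add (⟪x i, w⟫ - ⟪x j, w⟫) ⟪η, w⟫,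
            Real.cos_sub ⟪x i, w⟫ ⟪x j, w⟫]
          ring
        rw [key]
        apply mul_nonneg _ (by positivity)
        have hR : (0:ℝ) < (c₁ / c₂) ^ ((d : ℝ) / 2) :=
          Real.rpow_pos_of_pos (by positivity) _
        have hb₁ : 0 ≤ b₁ := le_trans (mul_nonneg hb₂ hR.le) hcond
        have h1 : b₂ * A₂⁻¹ * rexp (-(‖w‖ ^ 2 / (4 * c₂))) * Real.cos ⟪η, w⟫ ≤
            b₂ * A₂⁻¹ * rexp (-(‖w‖ ^ 2 / (4 * c₂))) := by
          nth_rewrite 2 [← mul_one (b₂ * A₂⁻¹ * rexp (-(‖w‖ ^ 2 / (4 * c₂))))]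
          exact mul_le_mul_of_nonneg_left (Real.cos_le_one _)
            (mul_nonneg (mul_nonneg hb₂ (inv_pos.2 hA₂).le) (Real.exp_nonneg _))
        have h2 : b₂ * A₂⁻¹ * rexp (-(‖w‖ ^ 2 / (4 * c₂))) ≤
            b₁ * A₁⁻¹ * rexp (-(‖w‖ ^ 2 / (4 * c₁))) := by
          have hAA : A₁ = A₂ * (c₁ / c₂) ^ ((d : ℝ) / 2) := by
            rw [hA₁def, hA₂def, ← Real.mul_rpow (by positivity) (by positivity)]
            congr 1
            field_simp
          have hbb : b₂ * A₂⁻¹ ≤ b₁ * A₁⁻¹ := by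
            rw [hAA, mul_inv]
            calc b₂ * A₂⁻¹
                = (b₂ * (c₁ / c₂) ^ ((d : ℝ) / 2)) *
                    (A₂⁻¹ * ((c₁ / c₂) ^ ((d : ℝ) / 2))⁻¹) := by
                  rw [mul_mul_mul_comm, mul_inv_cancel₀ (ne_of_gt hR), mul_one]
              _ ≤ b₁ * (A₂⁻¹ * ((c₁ / c₂) ^ ((d : ℝ) / 2))⁻¹) :=
                  mul_le_mul_of_nonneg_right hcond
                    (mul_nonneg (inv_pos.2 hA₂).le (inv_pos.2 hR).le)
          have hee : rexp (-(‖w‖ ^ 2 / (4 * c₂))) ≤ rexp (-(‖w‖ ^ 2 / (4 * c₁))) := by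
            apply Real.exp_le_exp.2
            rw [neg_le_neg_iff]
            apply div_le_div_of_nonneg_left (by positivity) (by positivity) (by linarith)
          exact mul_le_mul hbb hee (Real.exp_nonneg _)
            (mul_nonneg hb₁ (inv_pos.2 hA₁).le)
        linarith
    _ = ∑ i, ∑ j, v i * v j *
      (b₁ * rexp (-(c₁ * ‖x i - x j‖ ^ 2)) -
        b₂ / 2 * (rexp (-(c₂ * ‖x i - x j - η‖ ^ 2)) + rexp (-(c₂ * ‖x i - x j + η‖ ^ 2)))) := by
        rw [integral_finset_sum _ (fun i _ => integrable_finset_sum _ (fun j _ => hFint i j))]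
        apply Finset.sum_congr rfl
        intro i _
        rw [integral_finset_sum _ (fun j _ => hFint i j)]
        exact Finset.sum_congr rfl fun j _ => (hterm i j).symm

lemma gamma_repr {δ : ℝ} (hδ : 0 < δ) {u : ℝ} (hu : 0 ≤ u) :
    (1 + u) ^ (-δ) * Real.Gamma δ
      = ∫ s in Set.Ioi (0:ℝ), s ^ (δ - 1) * rexp (-((1 + u) * s)) := by
  rw [Real.integral_rpow_mul_exp_neg_mul_Ioi hδ (by linarith : (0:ℝ) < 1 + u)]
  congr 1
  rw [one_div, ← Real.rpow_neg_one (1 + u),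
    ← Real.rpow_mul (by linarith : (0:ℝ) ≤ 1 + u)]
  norm_num

lemma gamma_integrand_integrable {δ r : ℝ} (hδ : 0 < δ) (hr : 1 ≤ r) :
    IntegrableOn (fun s : ℝ => s ^ (δ - 1) * rexp (-(r * s))) (Set.Ioi 0) := by
  apply Integrable.mono (Real.GammaIntegral_convergent hδ)
  · apply ContinuousOn.aestronglyMeasurable _ measurableSet_Ioi
    apply ContinuousOn.mul
    · exact continuousOn_id.rpow_const (fun x hx => Or.inl (ne_of_gt hx))
    · exact ((continuous_const.mul continuous_id).neg.rexp).continuousOn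
  · filter_upwards [ae_restrict_mem measurableSet_Ioi] with s hs
    rw [Real.norm_eq_abs, Real.norm_eq_abs, abs_of_nonneg
      (mul_nonneg (Real.rpow_nonneg (le_of_lt hs) _) (Real.exp_nonneg _)),
      abs_of_nonneg (mul_nonneg (Real.exp_nonneg _) (Real.rpow_nonneg (le_of_lt hs) _)),
      mul_comm (rexp (-s))]
    apply mul_le_mul_of_nonneg_left _ (Real.rpow_nonneg (le_of_lt hs) _)
    apply Real.exp_le_exp.2
    have : s ≤ r * s := le_mul_of_one_le_left (le_of_lt hs) hr
    linarith

theorem statement_12 (d : ℕ) (hd : 1 ≤ d) (δ : ℝ) (hδ : ((d : ℝ) - 1) / 4 < δ)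
    (a₁ a₂ b₁ b₂ : ℝ) (ha₂ : 0 < a₂) (ha : a₂ ≤ a₁) (hb₁ : 0 ≤ b₁) (hb₂ : 0 ≤ b₂)
    (hcond : b₂ * (a₁ / a₂) ^ ((d : ℝ) / 2) ≤ b₁)
    (η : EuclideanSpace ℝ (Fin d)) :
    IsStationaryCovariance d
      (fun h => b₁ * (1 + a₁ * ‖h‖ ^ 2) ^ (-δ) -
        b₂ / 2 * ((1 + a₂ * ‖h - η‖ ^ 2) ^ (-δ) + (1 + a₂ * ‖h + η‖ ^ 2) ^ (-δ))) := by
  intro n x v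
  have hdR : (1:ℝ) ≤ (d:ℝ) := by exact_mod_cast hd
  have hδ0 : 0 < δ := lt_of_le_of_lt (by linarith : (0:ℝ) ≤ ((d:ℝ) - 1) / 4) hδ
  have ha₁ : 0 < a₁ := lt_of_lt_of_le ha₂ ha
  have hΓ : 0 < Real.Gamma δ := Real.Gamma_pos_of_pos hδ0
  set u₁ : Fin n → Fin n → ℝ := fun i j => a₁ * ‖x i - x j‖ ^ 2 with hu₁def
  set u₂ : Fin n → Fin n → ℝ := fun i j => a₂ * ‖x i - x j - η‖ ^ 2 with hu₂def
  set u₃ : Fin n → Fin n → ℝ := fun i j => a₂ * ‖x i - x j + η‖ ^ 2 with hu₃def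
  have hu₁ : ∀ i j, 0 ≤ u₁ i j := fun i j => by positivity
  have hu₂ : ∀ i j, 0 ≤ u₂ i j := fun i j => by positivity
  have hu₃ : ∀ i j, 0 ≤ u₃ i j := fun i j => by positivity
  set Ψ : Fin n → Fin n → ℝ → ℝ := fun i j s =>
    v i * v j * (b₁ * (s ^ (δ - 1) * rexp (-((1 + u₁ i j) * s))) -
      b₂ / 2 * (s ^ (δ - 1) * rexp (-((1 + u₂ i j) * s)) +
        s ^ (δ - 1) * rexp (-((1 + u₃ i j) * s)))) with hΨdef
  have hX : ∀ i j, IntegrableOn (fun s : ℝ =>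
      b₁ * (s ^ (δ - 1) * rexp (-((1 + u₁ i j) * s)))) (Set.Ioi 0) :=
    fun i j => (gamma_integrand_integrable hδ0 (by linarith [hu₁ i j])).const_mul _
  have hY : ∀ i j, IntegrableOn (fun s : ℝ =>
      s ^ (δ - 1) * rexp (-((1 + u₂ i j) * s))) (Set.Ioi 0) :=
    fun i j => gamma_integrand_integrable hδ0 (by linarith [hu₂ i j])
  have hZ : ∀ i j, IntegrableOn (fun s : ℝ =>
      s ^ (δ - 1) * rexp (-((1 + u₃ i j) * s))) (Set.Ioi 0) :=
    fun i j => gamma_integrand_integrable hδ0 (by linarith [hu₃ i j])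
  have hYZ : ∀ i j, IntegrableOn (fun s : ℝ =>
      b₂ / 2 * (s ^ (δ - 1) * rexp (-((1 + u₂ i j) * s)) +
        s ^ (δ - 1) * rexp (-((1 + u₃ i j) * s)))) (Set.Ioi 0) :=
    fun i j => ((hY i j).add (hZ i j)).const_mul _
  have hΨint : ∀ i j, IntegrableOn (Ψ i j) (Set.Ioi 0) :=
    fun i j => ((hX i j).sub (hYZ i j)).const_mul _
  have hterm : ∀ i j, v i * v j *
      (b₁ * (1 + u₁ i j) ^ (-δ) - b₂ / 2 * ((1 + u₂ i j) ^ (-δ) + (1 + u₃ i j) ^ (-δ)))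
      = (Real.Gamma δ)⁻¹ * ∫ s in Set.Ioi (0:ℝ), Ψ i j s := by
    intro i j
    rw [hΨdef]
    simp only
    rw [integral_const_mul, integral_sub (hX i j) (hYZ i j), integral_const_mul,
      integral_const_mul, integral_add (hY i j) (hZ i j),
      ← gamma_repr hδ0 (hu₁ i j), ← gamma_repr hδ0 (hu₂ i j), ← gamma_repr hδ0 (hu₃ i j)]
    field_simp
  show (0:ℝ) ≤ ∑ i, ∑ j, v i * v j *
      (b₁ * (1 + a₁ * ‖x i - x j‖ ^ 2) ^ (-δ) -
        b₂ / 2 * ((1 + a₂ * ‖x i - x j - η‖ ^ 2) ^ (-δ) + (1 + a₂ * ‖x i - x j + η‖ ^ 2) ^ (-δ)))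
  calc (0:ℝ) ≤ (Real.Gamma δ)⁻¹ * ∫ s in Set.Ioi (0:ℝ), ∑ i, ∑ j, Ψ i j s := by
        apply mul_nonneg (inv_pos.2 hΓ).le
        apply setIntegral_nonneg measurableSet_Ioi
        intro s hs
        have hs0 : (0:ℝ) < s := hs
        have key : ∑ i, ∑ j, Ψ i j s = (s ^ (δ - 1) * rexp (-s)) *
            ∑ i, ∑ j, v i * v j *
              (b₁ * rexp (-(a₁ * s * ‖x i - x j‖ ^ 2)) -
                b₂ / 2 * (rexp (-(a₂ * s * ‖x i - x j - η‖ ^ 2)) +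
                  rexp (-(a₂ * s * ‖x i - x j + η‖ ^ 2)))) := by
          rw [Finset.mul_sum]
          apply Finset.sum_congr rfl
          intro i _
          rw [Finset.mul_sum]
          apply Finset.sum_congr rfl
          intro j _
          rw [hΨdef]
          simp only [hu₁def, hu₂def, hu₃def]
          rw [show -((1 + a₁ * ‖x i - x j‖ ^ 2) * s) = -s + -(a₁ * s * ‖x i - x j‖ ^ 2) by ring,
            show -((1 + a₂ * ‖x i - x j - η‖ ^ 2) * s) = -s + -(a₂ * s * ‖x i - x j - η‖ ^ 2) by ring,
            show -((1 + a₂ * ‖x i - x j + η‖ ^ 2) * s) = -s + -(a₂ * s * ‖x i - x j + η‖ ^ 2) by ring,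
            Real.exp_add, Real.exp_add, Real.exp_add]
          ring
        rw [key]
        apply mul_nonneg (mul_nonneg (Real.rpow_nonneg hs0.le _) (Real.exp_nonneg _))
        have hcond' : b₂ * ((a₁ * s) / (a₂ * s)) ^ ((d : ℝ) / 2) ≤ b₁ := by
          rwa [mul_div_mul_right _ _ (ne_of_gt hs0)]
        exact gauss_quad_nonneg (by positivity) (by nlinarith) hb₂ hcond' η n x v
    _ = ∑ i, ∑ j, v i * v j *
      (b₁ * (1 + a₁ * ‖x i - x j‖ ^ 2) ^ (-δ) -
        b₂ / 2 * ((1 + a₂ * ‖x i - x j - η‖ ^ 2) ^ (-δ) +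
          (1 + a₂ * ‖x i - x j + η‖ ^ 2) ^ (-δ))) := by
        rw [integral_finset_sum _ (fun i _ => integrable_finset_sum _ (fun j _ => hΨint i j))]
        rw [Finset.mul_sum]
        apply Finset.sum_congr rfl
        intro i _
        rw [integral_finset_sum _ (fun j _ => hΨint i j), Finset.mul_sum]
        exact Finset.sum_congr rfl fun j _ => (hterm i j).symm
end
end

section
/- Let d ≥ 1 and δ > 0. Let a₁, a₂ > 0 and b₁, b₂ ≥ 0 be constants and u a unit vector in ℝ^d. Then the function h ↦ b₁ (1 + a₁‖h‖²)^{−δ} + 2δ b₂ (1 + a₂‖h‖²)^{−δ−1} − 4δ(δ+1) b₂ a₂ ⟨h,u⟩² (1 + a₂‖h‖²)^{−δ−2} is a stationary covariance function on ℝ^d. (This is the derivative-based construction T⁽³⁾ applied to two Cauchy models C_δ, written in closed form.) -/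
open MeasureTheory
open scoped BigOperators RealInnerProductSpace

noncomputable section

/-! ### Auxiliary lemmas -/

open Filter Topology
open scoped Nat

set_option maxHeartbeats 1000000

lemma qf_inner_pow {d n : ℕ} (x : Fin n → EuclideanSpace ℝ (Fin d)) (w : Fin n → ℝ) (m : ℕ) :
    0 ≤ ∑ i, ∑ j, w i * w j * (⟪x i, x j⟫ : ℝ) ^ m := by
  have hinner : ∀ i j : Fin n, (⟪x i, x j⟫ : ℝ) = ∑ k, x i k * x j k := by
    intro i j
    simp [PiLp.inner_apply, RCLike.inner_apply, conj_trivial]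
    exact Finset.sum_congr rfl fun k _ => mul_comm _ _
  have key : ∀ i j : Fin n, w i * w j * (⟪x i, x j⟫ : ℝ) ^ m
      = ∑ p : Fin m → Fin d, (w i * ∏ t, x i (p t)) * (w j * ∏ t, x j (p t)) := by
    intro i j
    rw [hinner, Fintype.sum_pow, Finset.mul_sum]
    refine Finset.sum_congr rfl fun p _ => ?_
    rw [Finset.prod_mul_distrib]; ring
  simp_rw [key]
  have swap : (∑ i : Fin n, ∑ j : Fin n, ∑ p : Fin m → Fin d,
        (w i * ∏ t, x i (p t)) * (w j * ∏ t, x j (p t)))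
      = ∑ p : Fin m → Fin d, (∑ i : Fin n, w i * ∏ t, x i (p t)) ^ 2 := by
    calc (∑ i : Fin n, ∑ j : Fin n, ∑ p : Fin m → Fin d,
          (w i * ∏ t, x i (p t)) * (w j * ∏ t, x j (p t)))
        = ∑ i : Fin n, ∑ p : Fin m → Fin d, ∑ j : Fin n,
          (w i * ∏ t, x i (p t)) * (w j * ∏ t, x j (p t)) :=
          Finset.sum_congr rfl fun i _ => Finset.sum_comm
      _ = ∑ p : Fin m → Fin d, ∑ i : Fin n, ∑ j : Fin n,
          (w i * ∏ t, x i (p t)) * (w j * ∏ t, x j (p t)) := Finset.sum_comm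
      _ = ∑ p : Fin m → Fin d, (∑ i : Fin n, w i * ∏ t, x i (p t)) ^ 2 := by
          refine Finset.sum_congr rfl fun p _ => ?_
          rw [sq, Finset.sum_mul_sum]
  rw [swap]
  exact Finset.sum_nonneg fun p _ => sq_nonneg _

lemma real_exp_tsum (t : ℝ) : Real.exp t = ∑' m : ℕ, t ^ m / m ! := by
  rw [Real.exp_eq_exp_ℝ, NormedSpace.exp_eq_tsum_div]

lemma qf_gauss {d n : ℕ} (c : ℝ) (hc : 0 ≤ c) (x : Fin n → EuclideanSpace ℝ (Fin d))
    (v : Fin n → ℝ) :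
    0 ≤ ∑ i, ∑ j, v i * v j * Real.exp (-c * ‖x i - x j‖ ^ 2) := by
  set w : Fin n → ℝ := fun i => v i * Real.exp (-c * ‖x i‖ ^ 2) with hw
  have hfac : ∀ i j : Fin n, v i * v j * Real.exp (-c * ‖x i - x j‖ ^ 2)
      = ∑' m : ℕ, w i * w j * ((2 * c * ⟪x i, x j⟫) ^ m / m !) := by
    intro i j
    rw [tsum_mul_left, ← real_exp_tsum]
    rw [hw]
    simp only []
    rw [norm_sub_sq_real]
    have harg : -c * (‖x i‖ ^ 2 - 2 * (⟪x i, x j⟫ : ℝ) + ‖x j‖ ^ 2)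
        = (-c * ‖x i‖ ^ 2) + ((-c * ‖x j‖ ^ 2) + 2 * c * ⟪x i, x j⟫) := by ring
    rw [harg, Real.exp_add, Real.exp_add]
    ring
  simp_rw [hfac]
  have hsummable : ∀ i j : Fin n, Summable (fun m : ℕ =>
      w i * w j * ((2 * c * ⟪x i, x j⟫) ^ m / m !)) := fun i j =>
    (Real.summable_pow_div_factorial _).mul_left _
  rw [show (∑ i : Fin n, ∑ j : Fin n, ∑' m : ℕ, w i * w j * ((2 * c * ⟪x i, x j⟫) ^ m / m !))
      = ∑' m : ℕ, ∑ i : Fin n, ∑ j : Fin n, w i * w j * ((2 * c * ⟪x i, x j⟫) ^ m / m !) from ?_]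
  · refine tsum_nonneg fun m => ?_
    have : ∀ i j : Fin n, w i * w j * ((2 * c * ⟪x i, x j⟫) ^ m / m !)
        = ((2 * c) ^ m / m !) * (w i * w j * (⟪x i, x j⟫ : ℝ) ^ m) := by
      intro i j; rw [mul_pow]; ring
    simp_rw [this, ← Finset.mul_sum]
    exact mul_nonneg (by positivity) (qf_inner_pow x w m)
  · rw [Summable.tsum_finsetSum fun i _ => ?_]
    · exact Finset.sum_congr rfl fun i _ => (Summable.tsum_finsetSum fun j _ => hsummable i j).symm
    · exact summable_sum fun j _ => hsummable i j

lemma qf_cauchy {d n : ℕ} {δ a : ℝ} (hδ : 0 < δ) (ha : 0 < a)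
    (x : Fin n → EuclideanSpace ℝ (Fin d)) (v : Fin n → ℝ) :
    0 ≤ ∑ i, ∑ j, v i * v j * (1 + a * ‖x i - x j‖ ^ 2) ^ (-δ) := by
  have hΓ : 0 < Real.Gamma δ := Real.Gamma_pos_of_pos hδ
  set F : Fin n → Fin n → ℝ → ℝ := fun i j s =>
    s ^ (δ - 1) * Real.exp (-s) * (v i * v j * Real.exp (-(s * a) * ‖x i - x j‖ ^ 2)) with hF
  have hr : ∀ i j : Fin n, (0:ℝ) < 1 + a * ‖x i - x j‖ ^ 2 := fun i j => by positivity
  have key : ∀ i j : Fin n, v i * v j * (1 + a * ‖x i - x j‖ ^ 2) ^ (-δ)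
      = (Real.Gamma δ)⁻¹ * ∫ s in Set.Ioi (0:ℝ), F i j s := by
    intro i j
    have h1 : ∫ s in Set.Ioi (0:ℝ), F i j s
        = (v i * v j) * ∫ s in Set.Ioi (0:ℝ),
            s ^ (δ - 1) * Real.exp (-((1 + a * ‖x i - x j‖ ^ 2) * s)) := by
      rw [← integral_const_mul]
      refine setIntegral_congr_fun measurableSet_Ioi fun s _ => ?_
      rw [hF]
      simp only []
      rw [show -((1 + a * ‖x i - x j‖ ^ 2) * s) = (-s) + (-(s * a) * ‖x i - x j‖ ^ 2) by ring,
        Real.exp_add]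
      ring
    rw [h1, Real.integral_rpow_mul_exp_neg_mul_Ioi hδ (hr i j), one_div,
      Real.inv_rpow (hr i j).le, Real.rpow_neg (hr i j).le]
    field_simp
  have hint : ∀ i j : Fin n, IntegrableOn (F i j) (Set.Ioi 0) := by
    intro i j
    have hbase : IntegrableOn (fun s : ℝ => |v i * v j| * (Real.exp (-s) * s ^ (δ - 1)))
        (Set.Ioi 0) := (Real.GammaIntegral_convergent hδ).const_mul _
    refine Integrable.mono hbase ?_ ?_
    · refine ContinuousOn.aestronglyMeasurable ?_ measurableSet_Ioi
      rw [hF]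
      refine ContinuousOn.mul (ContinuousOn.mul ?_ (by fun_prop)) (by fun_prop)
      exact fun s hs => (Real.continuousAt_rpow_const s _
        (Or.inl (ne_of_gt hs))).continuousWithinAt
    · rw [ae_restrict_iff' measurableSet_Ioi]
      refine Filter.Eventually.of_forall fun s hs => ?_
      have hs0 : (0:ℝ) < s := hs
      have hrpow : (0:ℝ) ≤ s ^ (δ - 1) := Real.rpow_nonneg hs0.le _
      have hE : Real.exp (-(s * a) * ‖x i - x j‖ ^ 2) ≤ 1 := by
        rw [Real.exp_le_one_iff]
        have : (0:ℝ) ≤ s * a * ‖x i - x j‖ ^ 2 := by positivity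
        nlinarith
      have hEpos : (0:ℝ) < Real.exp (-(s * a) * ‖x i - x j‖ ^ 2) := Real.exp_pos _
      rw [hF]
      simp only [Real.norm_eq_abs]
      rw [abs_mul, abs_mul, abs_mul, abs_of_nonneg hrpow, abs_of_nonneg (Real.exp_pos _).le,
        abs_of_nonneg hEpos.le,
        abs_of_nonneg (by positivity : (0:ℝ) ≤ |v i * v j| * (Real.exp (-s) * s ^ (δ - 1)))]
      calc s ^ (δ - 1) * Real.exp (-s) * (|v i * v j| * Real.exp (-(s * a) * ‖x i - x j‖ ^ 2))
          ≤ s ^ (δ - 1) * Real.exp (-s) * (|v i * v j| * 1) := by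
            refine mul_le_mul_of_nonneg_left ?_ (by positivity)
            exact mul_le_mul_of_nonneg_left hE (abs_nonneg _)
        _ = |v i * v j| * (Real.exp (-s) * s ^ (δ - 1)) := by ring
  simp_rw [key, ← Finset.mul_sum]
  refine mul_nonneg (inv_nonneg.mpr hΓ.le) ?_
  have hswap : (∑ i : Fin n, ∑ j : Fin n, ∫ s in Set.Ioi (0:ℝ), F i j s)
      = ∫ s in Set.Ioi (0:ℝ), ∑ i : Fin n, ∑ j : Fin n, F i j s := by
    rw [integral_finset_sum _ (fun i _ => integrable_finset_sum _ (fun j _ => hint i j))]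
    exact Finset.sum_congr rfl fun i _ => (integral_finset_sum _ (fun j _ => hint i j)).symm
  rw [hswap]
  refine setIntegral_nonneg measurableSet_Ioi fun s hs => ?_
  have hs0 : (0:ℝ) < s := hs
  have hsum : (∑ i : Fin n, ∑ j : Fin n, F i j s)
      = (s ^ (δ - 1) * Real.exp (-s)) *
        ∑ i : Fin n, ∑ j : Fin n, v i * v j * Real.exp (-(s * a) * ‖x i - x j‖ ^ 2) := by
    rw [hF]
    simp only [Finset.mul_sum]
  rw [hsum]
  have : (0:ℝ) ≤ s * a := by positivity
  exact mul_nonneg (by positivity) (qf_gauss (s * a) this x v)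

lemma diff2_limit (g g' : ℝ → ℝ) (L : ℝ) (hgg' : ∀ t, HasDerivAt g (g' t) t)
    (h2 : HasDerivAt g' L 0) :
    Tendsto (fun ε => (2 * g 0 - g ε - g (-ε)) / ε ^ 2) (𝓝[>] (0:ℝ)) (𝓝 (-L)) := by
  have hgc : Continuous g := by
    rw [continuous_iff_continuousAt]; exact fun t => (hgg' t).continuousAt
  have hf' : ∀ x : ℝ, HasDerivAt (fun ε => 2 * g 0 - g ε - g (-ε))
      (g' (-x) - g' x) x := by
    intro x
    have hneg : HasDerivAt (fun ε : ℝ => g (-ε)) (-(g' (-x))) x := by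
      have := (hgg' (-x)).comp x (hasDerivAt_neg x)
      simp only [mul_neg, mul_one] at this
      exact this
    have := ((hasDerivAt_const x (2 * g 0)).sub (hgg' x)).sub hneg
    exact this.congr_deriv (by ring)
  have hsq : ∀ x : ℝ, HasDerivAt (fun ε : ℝ => ε ^ 2) (2 * x) x := by
    intro x
    simpa using hasDerivAt_pow 2 x
  have hslope : Tendsto (fun t => (g' t - g' 0) / t) (𝓝[≠] (0:ℝ)) (𝓝 L) := by
    have := hasDerivAt_iff_tendsto_slope.mp h2
    simpa [slope_fun_def, div_eq_inv_mul] using this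
  have hpos_sub : (𝓝[>] (0:ℝ)) ≤ 𝓝[≠] (0:ℝ) :=
    nhdsWithin_mono 0 (fun x hx => ne_of_gt hx)
  have hneg_map : Tendsto (fun x : ℝ => -x) (𝓝[>] (0:ℝ)) (𝓝[≠] (0:ℝ)) := by
    rw [tendsto_nhdsWithin_iff]
    constructor
    · have : Tendsto (fun x : ℝ => -x) (𝓝 (0:ℝ)) (𝓝 (-0)) := (continuous_neg).tendsto 0
      simpa using this.mono_left nhdsWithin_le_nhds
    · exact eventually_nhdsWithin_of_forall fun x hx => (neg_lt_zero.mpr hx).ne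
  have hdiv : Tendsto (fun x => (g' (-x) - g' x) / (2 * x)) (𝓝[>] (0:ℝ)) (𝓝 (-L)) := by
    have h1 : Tendsto (fun x => (g' x - g' 0) / x) (𝓝[>] (0:ℝ)) (𝓝 L) :=
      hslope.mono_left hpos_sub
    have h2' : Tendsto (fun x => (g' (-x) - g' 0) / (-x)) (𝓝[>] (0:ℝ)) (𝓝 L) :=
      hslope.comp hneg_map
    have h3 : Tendsto (fun x => (-(1:ℝ)/2) * ((g' x - g' 0) / x + (g' (-x) - g' 0) / (-x)))
        (𝓝[>] (0:ℝ)) (𝓝 ((-(1:ℝ)/2) * (L + L))) := (h1.add h2').const_mul _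
    have heq : ∀ᶠ x in 𝓝[>] (0:ℝ),
        (-(1:ℝ)/2) * ((g' x - g' 0) / x + (g' (-x) - g' 0) / (-x))
          = (g' (-x) - g' x) / (2 * x) := by
      refine eventually_nhdsWithin_of_forall fun x hx => ?_
      have hx0 : x ≠ 0 := ne_of_gt hx
      field_simp
      ring
    have := h3.congr' heq
    convert this using 2
    ring
  have hfa : Tendsto (fun ε => 2 * g 0 - g ε - g (-ε)) (𝓝[>] (0:ℝ)) (𝓝 0) := by
    have hc : Continuous (fun ε => 2 * g 0 - g ε - g (-ε)) := by continuity
    have := (hc.tendsto 0).mono_left (nhdsWithin_le_nhds (s := Set.Ioi (0:ℝ)))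
    convert this using 2
    ring_nf
  have hga : Tendsto (fun ε : ℝ => ε ^ 2) (𝓝[>] (0:ℝ)) (𝓝 0) := by
    have hc : Continuous (fun ε : ℝ => ε ^ 2) := by continuity
    have := (hc.tendsto 0).mono_left (nhdsWithin_le_nhds (s := Set.Ioi (0:ℝ)))
    simpa using this
  exact HasDerivAt.lhopital_zero_nhdsGT
    (Filter.Eventually.of_forall hf') (Filter.Eventually.of_forall hsq)
    (eventually_nhdsWithin_of_forall fun x hx => by
      have h : (0:ℝ) < x := hx
      positivity)
    hfa hga hdiv

lemma pair_limit {d : ℕ} {δ a₂ : ℝ} (hδ : 0 < δ) (ha₂ : 0 < a₂)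
    (u : EuclideanSpace ℝ (Fin d)) (hu : ‖u‖ = 1) (h : EuclideanSpace ℝ (Fin d)) :
    Tendsto (fun ε : ℝ => (2 * (1 + a₂ * ‖h‖ ^ 2) ^ (-δ)
        - (1 + a₂ * ‖h + ε • u‖ ^ 2) ^ (-δ) - (1 + a₂ * ‖h - ε • u‖ ^ 2) ^ (-δ)) / ε ^ 2)
      (𝓝[>] (0:ℝ))
      (𝓝 (2 * δ * a₂ * (1 + a₂ * ‖h‖ ^ 2) ^ (-δ - 1)
        - 4 * δ * (δ + 1) * a₂ ^ 2 * (⟪h, u⟫ : ℝ) ^ 2 * (1 + a₂ * ‖h‖ ^ 2) ^ (-δ - 2))) := by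
  set A : ℝ := 1 + a₂ * ‖h‖ ^ 2 with hA
  set B : ℝ := 2 * a₂ * (⟪h, u⟫ : ℝ) with hB
  set q : ℝ → ℝ := fun t => A + B * t + a₂ * t ^ 2 with hq
  set g : ℝ → ℝ := fun t => q t ^ (-δ) with hg
  have hqnorm : ∀ t : ℝ, q t = 1 + a₂ * ‖h + t • u‖ ^ 2 := by
    intro t
    rw [hq]
    simp only []
    rw [norm_add_sq_real, real_inner_smul_right, norm_smul, hu, Real.norm_eq_abs, mul_one,
      sq_abs, hA, hB]
    ring
  have hqpos : ∀ t : ℝ, 0 < q t := fun t => by rw [hqnorm t]; positivity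
  have hq' : ∀ t : ℝ, HasDerivAt q (B + 2 * a₂ * t) t := by
    intro t
    have h1 : HasDerivAt (fun s : ℝ => A + B * s) (B * 1) t :=
      ((hasDerivAt_id t).const_mul B).const_add A
    have h2 : HasDerivAt (fun s : ℝ => a₂ * s ^ 2) (a₂ * (2 * t ^ 1)) t :=
      (hasDerivAt_pow 2 t).const_mul a₂
    have := h1.add h2
    exact this.congr_deriv (by ring)
  set g' : ℝ → ℝ := fun t => (B + 2 * a₂ * t) * -δ * q t ^ (-δ - 1) with hg'def
  have hg' : ∀ t : ℝ, HasDerivAt g (g' t) t := fun t =>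
    (hq' t).rpow_const (Or.inl (hqpos t).ne')
  set L : ℝ := 2 * a₂ * -δ * q 0 ^ (-δ - 1)
      + (B + 2 * a₂ * 0) * -δ * ((B + 2 * a₂ * 0) * (-δ - 1) * q 0 ^ (-δ - 1 - 1)) with hL
  have h2 : HasDerivAt g' L 0 := by
    have hrpow : HasDerivAt (fun t => q t ^ (-δ - 1))
        ((B + 2 * a₂ * 0) * (-δ - 1) * q 0 ^ (-δ - 1 - 1)) 0 :=
      (hq' 0).rpow_const (Or.inl (hqpos 0).ne')
    have hlin : HasDerivAt (fun t : ℝ => B + 2 * a₂ * t) (2 * a₂) 0 := by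
      simpa using ((hasDerivAt_id (0:ℝ)).const_mul (2 * a₂)).const_add B
    have hlin2 : HasDerivAt (fun t : ℝ => (B + 2 * a₂ * t) * -δ) (2 * a₂ * -δ) 0 :=
      hlin.mul_const (-δ)
    exact hlin2.mul hrpow
  have hT := diff2_limit g g' L hg' h2
  have hq0 : q 0 = A := by rw [hq]; simp
  have hfun : (fun ε : ℝ => (2 * g 0 - g ε - g (-ε)) / ε ^ 2)
      = (fun ε : ℝ => (2 * (1 + a₂ * ‖h‖ ^ 2) ^ (-δ)
        - (1 + a₂ * ‖h + ε • u‖ ^ 2) ^ (-δ) - (1 + a₂ * ‖h - ε • u‖ ^ 2) ^ (-δ)) / ε ^ 2) := by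
    funext ε
    have e0 : g 0 = (1 + a₂ * ‖h‖ ^ 2) ^ (-δ) := by
      rw [hg]; simp only []; rw [hq0, hA]
    have e1 : g ε = (1 + a₂ * ‖h + ε • u‖ ^ 2) ^ (-δ) := by
      rw [hg]; simp only []; rw [hqnorm ε]
    have e2 : g (-ε) = (1 + a₂ * ‖h - ε • u‖ ^ 2) ^ (-δ) := by
      rw [hg]; simp only []; rw [hqnorm (-ε), neg_smul, ← sub_eq_add_neg]
    rw [e0, e1, e2]
  rw [hfun] at hT
  have hval : -L = 2 * δ * a₂ * (1 + a₂ * ‖h‖ ^ 2) ^ (-δ - 1)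
      - 4 * δ * (δ + 1) * a₂ ^ 2 * (⟪h, u⟫ : ℝ) ^ 2 * (1 + a₂ * ‖h‖ ^ 2) ^ (-δ - 2) := by
    rw [hL, hq0, show (-δ - 1 - 1 : ℝ) = -δ - 2 from by ring, hB, hA]
    ring
  rw [hval] at hT
  exact hT

lemma qf_diff_nonneg {d n : ℕ} {δ a₂ : ℝ} (hδ : 0 < δ) (ha₂ : 0 < a₂)
    (u : EuclideanSpace ℝ (Fin d)) (ε : ℝ)
    (x : Fin n → EuclideanSpace ℝ (Fin d)) (v : Fin n → ℝ) :
    0 ≤ ∑ i, ∑ j, v i * v j *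
      (2 * (1 + a₂ * ‖x i - x j‖ ^ 2) ^ (-δ)
        - (1 + a₂ * ‖x i - x j + ε • u‖ ^ 2) ^ (-δ)
        - (1 + a₂ * ‖x i - x j - ε • u‖ ^ 2) ^ (-δ)) := by
  have h0 := qf_cauchy hδ ha₂ (Fin.append x (fun i => x i + ε • u))
    (Fin.append v (fun i => -v i))
  refine le_of_le_of_eq h0 ?_
  rw [Fin.sum_univ_add (f := fun k => ∑ l : Fin (n + n),
    Fin.append v (fun i => -v i) k * Fin.append v (fun i => -v i) l *
      (1 + a₂ * ‖Fin.append x (fun i => x i + ε • u) k -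
        Fin.append x (fun i => x i + ε • u) l‖ ^ 2) ^ (-δ))]
  simp only [Fin.append_left, Fin.append_right]
  rw [← Finset.sum_add_distrib]
  refine Finset.sum_congr rfl fun i _ => ?_
  rw [Fin.sum_univ_add (f := fun l =>
    v i * Fin.append v (fun i => -v i) l *
      (1 + a₂ * ‖x i - Fin.append x (fun i => x i + ε • u) l‖ ^ 2) ^ (-δ))]
  rw [Fin.sum_univ_add (f := fun l =>
    (-v i) * Fin.append v (fun i => -v i) l *
      (1 + a₂ * ‖(x i + ε • u) - Fin.append x (fun i => x i + ε • u) l‖ ^ 2) ^ (-δ))]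
  simp only [Fin.append_left, Fin.append_right]
  rw [← Finset.sum_add_distrib, ← Finset.sum_add_distrib, ← Finset.sum_add_distrib]
  refine Finset.sum_congr rfl fun j _ => ?_
  have e1 : x i - (x j + ε • u) = x i - x j - ε • u := by abel
  have e2 : x i + ε • u - x j = x i - x j + ε • u := by abel
  have e3 : x i + ε • u - (x j + ε • u) = x i - x j := by abel
  rw [e1, e2, e3]
  ring

theorem statement_13 (d : ℕ) (hd : 1 ≤ d) (δ : ℝ) (hδ : 0 < δ)
    (a₁ a₂ b₁ b₂ : ℝ) (ha₁ : 0 < a₁) (ha₂ : 0 < a₂) (hb₁ : 0 ≤ b₁) (hb₂ : 0 ≤ b₂)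
    (u : EuclideanSpace ℝ (Fin d)) (hu : ‖u‖ = 1) :
    IsStationaryCovariance d
      (fun h => b₁ * (1 + a₁ * ‖h‖ ^ 2) ^ (-δ) +
        2 * δ * b₂ * (1 + a₂ * ‖h‖ ^ 2) ^ (-δ - 1) -
        4 * δ * (δ + 1) * b₂ * a₂ * (⟪h, u⟫ : ℝ) ^ 2 * (1 + a₂ * ‖h‖ ^ 2) ^ (-δ - 2)) := by
  intro n x v
  simp only []
  have goal_eq : (∑ i : Fin n, ∑ j : Fin n, v i * v j *
        (b₁ * (1 + a₁ * ‖x i - x j‖ ^ 2) ^ (-δ) +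
          2 * δ * b₂ * (1 + a₂ * ‖x i - x j‖ ^ 2) ^ (-δ - 1) -
          4 * δ * (δ + 1) * b₂ * a₂ * (⟪x i - x j, u⟫ : ℝ) ^ 2 *
            (1 + a₂ * ‖x i - x j‖ ^ 2) ^ (-δ - 2)))
      = b₁ * (∑ i : Fin n, ∑ j : Fin n, v i * v j * (1 + a₁ * ‖x i - x j‖ ^ 2) ^ (-δ))
      + ∑ i : Fin n, ∑ j : Fin n, v i * v j *
          (2 * δ * b₂ * (1 + a₂ * ‖x i - x j‖ ^ 2) ^ (-δ - 1) -
            4 * δ * (δ + 1) * b₂ * a₂ * (⟪x i - x j, u⟫ : ℝ) ^ 2 *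
              (1 + a₂ * ‖x i - x j‖ ^ 2) ^ (-δ - 2)) := by
    rw [Finset.mul_sum, ← Finset.sum_add_distrib]
    refine Finset.sum_congr rfl fun i _ => ?_
    rw [Finset.mul_sum, ← Finset.sum_add_distrib]
    refine Finset.sum_congr rfl fun j _ => ?_
    ring
  rw [goal_eq]
  refine add_nonneg (mul_nonneg hb₁ (qf_cauchy hδ ha₁ x v)) ?_
  set S : ℝ → ℝ := fun ε => ∑ i : Fin n, ∑ j : Fin n, v i * v j * (b₂ / a₂ *
      ((2 * (1 + a₂ * ‖x i - x j‖ ^ 2) ^ (-δ)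
        - (1 + a₂ * ‖x i - x j + ε • u‖ ^ 2) ^ (-δ)
        - (1 + a₂ * ‖x i - x j - ε • u‖ ^ 2) ^ (-δ)) / ε ^ 2)) with hS
  have hTend : Filter.Tendsto S (𝓝[>] (0:ℝ))
      (𝓝 (∑ i : Fin n, ∑ j : Fin n, v i * v j *
        (2 * δ * b₂ * (1 + a₂ * ‖x i - x j‖ ^ 2) ^ (-δ - 1) -
          4 * δ * (δ + 1) * b₂ * a₂ * (⟪x i - x j, u⟫ : ℝ) ^ 2 *
            (1 + a₂ * ‖x i - x j‖ ^ 2) ^ (-δ - 2)))) := by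
    rw [hS]
    refine tendsto_finset_sum _ fun i _ => tendsto_finset_sum _ fun j _ => ?_
    have hpl := ((pair_limit hδ ha₂ u hu (x i - x j)).const_mul (b₂ / a₂)).const_mul
      (v i * v j)
    have hval : v i * v j * (b₂ / a₂ *
          (2 * δ * a₂ * (1 + a₂ * ‖x i - x j‖ ^ 2) ^ (-δ - 1)
            - 4 * δ * (δ + 1) * a₂ ^ 2 * (⟪x i - x j, u⟫ : ℝ) ^ 2 *
              (1 + a₂ * ‖x i - x j‖ ^ 2) ^ (-δ - 2)))
        = v i * v j *
          (2 * δ * b₂ * (1 + a₂ * ‖x i - x j‖ ^ 2) ^ (-δ - 1) -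
            4 * δ * (δ + 1) * b₂ * a₂ * (⟪x i - x j, u⟫ : ℝ) ^ 2 *
              (1 + a₂ * ‖x i - x j‖ ^ 2) ^ (-δ - 2)) := by
      field_simp
    rw [← hval]
    exact hpl
  have hNon : ∀ᶠ ε in 𝓝[>] (0:ℝ), 0 ≤ S ε := by
    refine eventually_nhdsWithin_of_forall fun ε hε => ?_
    rw [hS]
    simp only []
    have hfactor : (∑ i : Fin n, ∑ j : Fin n, v i * v j * (b₂ / a₂ *
        ((2 * (1 + a₂ * ‖x i - x j‖ ^ 2) ^ (-δ)
          - (1 + a₂ * ‖x i - x j + ε • u‖ ^ 2) ^ (-δ)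
          - (1 + a₂ * ‖x i - x j - ε • u‖ ^ 2) ^ (-δ)) / ε ^ 2)))
        = (b₂ / (a₂ * ε ^ 2)) * ∑ i : Fin n, ∑ j : Fin n, v i * v j *
          (2 * (1 + a₂ * ‖x i - x j‖ ^ 2) ^ (-δ)
            - (1 + a₂ * ‖x i - x j + ε • u‖ ^ 2) ^ (-δ)
            - (1 + a₂ * ‖x i - x j - ε • u‖ ^ 2) ^ (-δ)) := by
      rw [Finset.mul_sum]
      refine Finset.sum_congr rfl fun i _ => ?_
      rw [Finset.mul_sum]
      refine Finset.sum_congr rfl fun j _ => ?_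
      ring
    rw [hfactor]
    exact mul_nonneg (div_nonneg hb₂ (by positivity)) (qf_diff_nonneg hδ ha₂ u ε x v)
  exact ge_of_tendsto hTend hNon
end
end

section
/- For every positive integer d and every δ > 0, the function C : ℝ^d → ℝ defined by C(h) = (1 + ‖h‖²)^{−δ} is a continuous stationary covariance function on ℝ^d; that is, the Cauchy function C_δ(t) = (1 + t²)^{−δ} belongs to the class Φ_d for every d ≥ 1. -/
open MeasureTheory
open scoped BigOperators RealInnerProductSpace

noncomputable section

lemma innerPowPSD {d n : ℕ} (k : ℕ) (x : Fin n → EuclideanSpace ℝ (Fin d)) (w : Fin n → ℝ) :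
    0 ≤ ∑ i, ∑ j, w i * w j * (⟪x i, x j⟫ : ℝ) ^ k := by
  have hinner : ∀ i j, (⟪x i, x j⟫ : ℝ) = ∑ a, x i a * x j a := by
    intro i j
    simp [PiLp.inner_apply, RCLike.inner_apply, mul_comm]
  have key : ∀ i j : Fin n, w i * w j * (⟪x i, x j⟫ : ℝ) ^ k
      = ∑ p : Fin k → Fin d, (w i * ∏ l, x i (p l)) * (w j * ∏ l, x j (p l)) := by
    intro i j
    rw [hinner, Fintype.sum_pow, Finset.mul_sum]
    refine Finset.sum_congr rfl fun p _ => ?_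
    rw [Finset.prod_mul_distrib]; ring
  simp_rw [key]
  have swap : (∑ i, ∑ j, ∑ p : Fin k → Fin d,
        (w i * ∏ l, x i (p l)) * (w j * ∏ l, x j (p l)))
      = ∑ p : Fin k → Fin d, ∑ i, ∑ j,
        (w i * ∏ l, x i (p l)) * (w j * ∏ l, x j (p l)) :=
    (Finset.sum_congr rfl fun i _ => Finset.sum_comm).trans Finset.sum_comm
  rw [swap]
  refine Finset.sum_nonneg fun p _ => ?_
  rw [← Finset.sum_mul_sum]
  exact mul_self_nonneg _

lemma gaussPSD {d n : ℕ} (x : Fin n → EuclideanSpace ℝ (Fin d)) (v : Fin n → ℝ)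
    {t : ℝ} (ht : 0 ≤ t) :
    0 ≤ ∑ i, ∑ j, v i * v j * Real.exp (-(t * ‖x i - x j‖ ^ 2)) := by
  set w : Fin n → ℝ := fun i => v i * Real.exp (-(t * ‖x i‖ ^ 2)) with hw
  have hsummable : ∀ c : ℝ, Summable (fun k : ℕ => c ^ k / (Nat.factorial k : ℝ)) :=
    fun c => Real.summable_pow_div_factorial c
  have hexp : ∀ c : ℝ, Real.exp c = ∑' k : ℕ, c ^ k / (Nat.factorial k : ℝ) := by
    intro c
    rw [Real.exp_eq_exp_ℝ, NormedSpace.exp_eq_tsum_div]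
  have key : ∀ i j : Fin n, v i * v j * Real.exp (-(t * ‖x i - x j‖ ^ 2))
      = ∑' k : ℕ, (2 * t) ^ k / (Nat.factorial k : ℝ)
          * (w i * w j * (⟪x i, x j⟫ : ℝ) ^ k) := by
    intro i j
    have hns : ‖x i - x j‖ ^ 2 = ‖x i‖ ^ 2 - 2 * (⟪x i, x j⟫ : ℝ) + ‖x j‖ ^ 2 :=
      norm_sub_sq_real _ _
    have : -(t * ‖x i - x j‖ ^ 2)
        = -(t * ‖x i‖ ^ 2) + -(t * ‖x j‖ ^ 2) + (2 * t) * (⟪x i, x j⟫ : ℝ) := by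
      rw [hns]; ring
    rw [this, Real.exp_add, Real.exp_add, hexp ((2 * t) * (⟪x i, x j⟫ : ℝ))]
    rw [← tsum_mul_left, ← tsum_mul_left]
    refine tsum_congr fun k => ?_
    rw [mul_pow, hw]
    simp only []
    field_simp
  simp_rw [key]
  have hsum : ∀ i j : Fin n, Summable (fun k : ℕ =>
      (2 * t) ^ k / (Nat.factorial k : ℝ) * (w i * w j * (⟪x i, x j⟫ : ℝ) ^ k)) := by
    intro i j
    have h1 : Summable (fun k : ℕ => ((2 * t) * (⟪x i, x j⟫ : ℝ)) ^ k / (Nat.factorial k : ℝ)) :=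
      hsummable _
    have := h1.mul_left (w i * w j)
    refine this.congr fun k => ?_
    rw [mul_pow]; ring
  have swap : (∑ i, ∑ j, ∑' k : ℕ, (2 * t) ^ k / (Nat.factorial k : ℝ)
        * (w i * w j * (⟪x i, x j⟫ : ℝ) ^ k))
      = ∑' k : ℕ, ∑ i, ∑ j, (2 * t) ^ k / (Nat.factorial k : ℝ)
        * (w i * w j * (⟪x i, x j⟫ : ℝ) ^ k) := by
    rw [Summable.tsum_finsetSum (fun i _ => ?_)]
    · refine Finset.sum_congr rfl fun i _ => (Summable.tsum_finsetSum fun j _ => hsum i j).symm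
    · exact (hasSum_sum fun j _ => (hsum i j).hasSum).summable
  rw [swap]
  refine tsum_nonneg fun k => ?_
  have : (∑ i, ∑ j, (2 * t) ^ k / (Nat.factorial k : ℝ)
        * (w i * w j * (⟪x i, x j⟫ : ℝ) ^ k))
      = (2 * t) ^ k / (Nat.factorial k : ℝ) * ∑ i, ∑ j, w i * w j * (⟪x i, x j⟫ : ℝ) ^ k := by
    rw [Finset.mul_sum]
    exact Finset.sum_congr rfl fun i _ => by rw [Finset.mul_sum]
  rw [this]
  exact mul_nonneg (by positivity) (innerPowPSD k x w)

theorem statement_16 (d : ℕ) (hd : 1 ≤ d) (δ : ℝ) (hδ : 0 < δ) :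
    Continuous (fun h : EuclideanSpace ℝ (Fin d) => (1 + ‖h‖ ^ 2) ^ (-δ)) ∧
    IsStationaryCovariance d (fun h => (1 + ‖h‖ ^ 2) ^ (-δ)) := by
  constructor
  · have hc : Continuous fun h : EuclideanSpace ℝ (Fin d) => 1 + ‖h‖ ^ 2 :=
      continuous_const.add (continuous_norm.pow 2)
    exact hc.rpow_const fun h => Or.inl (by positivity)
  · intro n x v
    have hΓ : 0 < Real.Gamma δ := Real.Gamma_pos_of_pos hδ
    have repr : ∀ a : ℝ, 0 ≤ a → (1 + a) ^ (-δ)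
        = (Real.Gamma δ)⁻¹ * ∫ t in Set.Ioi (0:ℝ), t ^ (δ - 1) * Real.exp (-((1 + a) * t)) := by
      intro a ha
      rw [Real.integral_rpow_mul_exp_neg_mul_Ioi hδ (by linarith : (0:ℝ) < 1 + a)]
      rw [one_div, Real.inv_rpow (by linarith : (0:ℝ) ≤ 1 + a), ← Real.rpow_neg (by linarith)]
      field_simp
    have hint : ∀ a : ℝ, 0 ≤ a → IntegrableOn
        (fun t : ℝ => t ^ (δ - 1) * Real.exp (-((1 + a) * t))) (Set.Ioi 0) := by
      intro a ha
      have h1 : IntegrableOn (fun t : ℝ => Real.exp (-t) * t ^ (δ - 1)) (Set.Ioi 0) :=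
        Real.GammaIntegral_convergent hδ
      refine Integrable.mono h1 ?_ ?_
      · refine ContinuousOn.aestronglyMeasurable (ContinuousOn.mul ?_ ?_) measurableSet_Ioi
        · exact fun t ht =>
            (continuousAt_id.rpow_const (Or.inl (ne_of_gt ht))).continuousWithinAt
        · exact (Real.continuous_exp.comp
            ((continuous_const.mul continuous_id).neg)).continuousOn
      · filter_upwards [ae_restrict_mem measurableSet_Ioi] with t ht
        have htpos : (0:ℝ) < t := ht
        rw [Real.norm_eq_abs, Real.norm_eq_abs,
          abs_of_nonneg (by positivity), abs_of_nonneg (by positivity)]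
        rw [mul_comm (Real.exp (-t))]
        refine mul_le_mul_of_nonneg_left ?_ (Real.rpow_nonneg htpos.le _)
        exact Real.exp_le_exp.mpr (by nlinarith)
    have hInt : ∀ i j : Fin n, Integrable
        (fun t : ℝ => v i * v j * (t ^ (δ - 1)
          * Real.exp (-((1 + ‖x i - x j‖ ^ 2) * t))))
        (volume.restrict (Set.Ioi 0)) :=
      fun i j => (hint _ (by positivity)).const_mul _
    calc (0:ℝ)
        ≤ (Real.Gamma δ)⁻¹ * ∫ t in Set.Ioi (0:ℝ), ∑ i, ∑ j,
            v i * v j * (t ^ (δ - 1) * Real.exp (-((1 + ‖x i - x j‖ ^ 2) * t))) := by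
          refine mul_nonneg (inv_nonneg.mpr hΓ.le)
            (setIntegral_nonneg measurableSet_Ioi fun t ht => ?_)
          have htpos : (0:ℝ) < t := ht
          have hkey : ∀ i j : Fin n,
              v i * v j * (t ^ (δ - 1) * Real.exp (-((1 + ‖x i - x j‖ ^ 2) * t)))
              = (t ^ (δ - 1) * Real.exp (-t))
                * (v i * v j * Real.exp (-(t * ‖x i - x j‖ ^ 2))) := by
            intro i j
            rw [show -((1 + ‖x i - x j‖ ^ 2) * t) = -t + -(t * ‖x i - x j‖ ^ 2) by ring,
              Real.exp_add]
            ring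
          simp_rw [hkey, ← Finset.mul_sum]
          have h2 : (0:ℝ) ≤ t ^ (δ - 1) * Real.exp (-t) := by positivity
          exact mul_nonneg h2 (gaussPSD x v htpos.le)
      _ = ∑ i, ∑ j, v i * v j * ((Real.Gamma δ)⁻¹
            * ∫ t in Set.Ioi (0:ℝ), t ^ (δ - 1)
                * Real.exp (-((1 + ‖x i - x j‖ ^ 2) * t))) := by
          rw [MeasureTheory.integral_finset_sum _ (fun i _ =>
            integrable_finset_sum _ (fun j _ => hInt i j)), Finset.mul_sum]
          refine Finset.sum_congr rfl fun i _ => ?_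
          rw [MeasureTheory.integral_finset_sum _ (fun j _ => hInt i j), Finset.mul_sum]
          refine Finset.sum_congr rfl fun j _ => ?_
          rw [MeasureTheory.integral_const_mul]
          ring
      _ = ∑ i, ∑ j, v i * v j * (1 + ‖x i - x j‖ ^ 2) ^ (-δ) := by
          refine Finset.sum_congr rfl fun i _ => Finset.sum_congr rfl fun j _ => ?_
          rw [← repr _ (by positivity)]
end
end
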